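/- arXiv:1802.06537 — 4 statements merged into one kernel-verified Lean document; each statement's English description precedes it below -/
import Mathlib

section
/- Let n ≥ 2 and let p : ℕ → [0,1] satisfy D^{n−1}·p(D) → ∞ as D → ∞. Then for the random set G of the graded model M(n,D,p), the probability that G contains a witness set tends to 1 as D → ∞; here a witness set is a subset L ⊆ G with exactly n elements such that L is dominant and no element of G strongly divides the componentwise maximum lcm(L) of the elements of L. -/
open Finset Filter

/-- The set `Ω_D` of exponent vectors of degree `D` in `n` variables. -/
def degSet (n D : ℕ) : Finset (Fin n → ℕ) := Finset.Nat.antidiagonalTuple n D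

/-- Probability of the event `E` under the graded model `M(n,D,p)`. -/
noncomputable def grmPr (n D : ℕ) (p : ℝ) (E : Set (Finset (Fin n → ℕ))) : ℝ :=
  ∑ G ∈ (degSet n D).powerset,
    Set.indicator E (fun _ => 1) G * (p ^ G.card * (1 - p) ^ ((degSet n D).card - G.card))

/-- `β` strongly divides `γ`. -/
def StronglyDivides {n : ℕ} (β γ : Fin n → ℕ) : Prop :=
  ∀ i, β i ≠ 0 → β i < γ i

/-- A finite set `L ⊆ ℕ^n` is dominant if every `α ∈ L` has a coordinate `i`
with `α i` strictly bigger than `β i` for every other `β ∈ L`. -/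
def DominantSet {n : ℕ} (L : Finset (Fin n → ℕ)) : Prop :=
  ∀ α ∈ L, ∃ i, ∀ β ∈ L, β ≠ α → β i < α i

/-- The componentwise maximum (exponent vector of the lcm) of the elements of `L`. -/
def lcmVec {n : ℕ} (L : Finset (Fin n → ℕ)) : Fin n → ℕ :=
  fun i => L.sup fun β => β i

/-- `L` is a witness set for `G`: `L ⊆ G`, `L` is dominant, `|L| = n`, and no element
of `G` strongly divides `lcm L`. -/
def IsWitnessSet (n : ℕ) (G L : Finset (Fin n → ℕ)) : Prop :=
  L ⊆ G ∧ DominantSet L ∧ L.card = n ∧ ∀ g ∈ G, ¬ StronglyDivides g (lcmVec L)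


set_option linter.unusedSectionVars false
set_option linter.unusedVariables false
set_option maxHeartbeats 1000000

namespace RMIaux

variable {V : Type*} [DecidableEq V]

variable {V : Type*} [DecidableEq V]

/-- Weighted sum over subsets of `S`: the Bernoulli(p) product measure expectation of `h`. -/
noncomputable def Wgt (p : ℝ) (S : Finset V) (h : Finset V → ℝ) : ℝ :=
  ∑ G ∈ S.powerset, h G * (p ^ G.card * (1 - p) ^ (S.card - G.card))

theorem Wgt_congr (p : ℝ) {S : Finset V} {h h' : Finset V → ℝ}
    (hh : ∀ G ⊆ S, h G = h' G) : Wgt p S h = Wgt p S h' := by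
  unfold Wgt
  refine Finset.sum_congr rfl fun G hG => ?_
  rw [hh G (Finset.mem_powerset.1 hG)]

theorem Wgt_insert (p : ℝ) {x : V} {S : Finset V} (hx : x ∉ S) (h : Finset V → ℝ) :
    Wgt p (insert x S) h = p * Wgt p S (fun G => h (insert x G)) + (1 - p) * Wgt p S h := by
  have A : ∑ G ∈ S.powerset, h G * (p ^ G.card * (1 - p) ^ ((insert x S).card - G.card))
      = (1 - p) * Wgt p S h := by
    unfold Wgt
    rw [Finset.mul_sum]
    refine Finset.sum_congr rfl fun G hG => ?_
    have hGS : G ⊆ S := Finset.mem_powerset.1 hG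
    have hcard : G.card ≤ S.card := Finset.card_le_card hGS
    rw [Finset.card_insert_of_notMem hx]
    have he : S.card + 1 - G.card = (S.card - G.card) + 1 := by omega
    rw [he, pow_succ]
    ring
  have B : ∑ G ∈ S.powerset,
        h (insert x G) * (p ^ (insert x G).card * (1 - p) ^ ((insert x S).card - (insert x G).card))
      = p * Wgt p S (fun G => h (insert x G)) := by
    unfold Wgt
    rw [Finset.mul_sum]
    refine Finset.sum_congr rfl fun G hG => ?_
    have hGS : G ⊆ S := Finset.mem_powerset.1 hG
    have hxG : x ∉ G := fun hxx => hx (hGS hxx)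
    have hcard : G.card ≤ S.card := Finset.card_le_card hGS
    rw [Finset.card_insert_of_notMem hx, Finset.card_insert_of_notMem hxG]
    have he : S.card + 1 - (G.card + 1) = S.card - G.card := by omega
    rw [he, pow_succ]
    ring
  show ∑ G ∈ (insert x S).powerset, _ = _
  rw [Finset.sum_powerset_insert hx, A, B]
  ring

theorem Wgt_one (p : ℝ) (S : Finset V) : Wgt p S (fun _ => 1) = 1 := by
  induction S using Finset.induction_on with
  | empty => simp [Wgt]
  | insert _ _ hx ih => rw [Wgt_insert p hx]; rw [ih]; ring

theorem Wgt_mono (p : ℝ) (hp0 : 0 ≤ p) (hp1 : p ≤ 1) {S : Finset V} {h h' : Finset V → ℝ}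
    (hh : ∀ G ⊆ S, h G ≤ h' G) : Wgt p S h ≤ Wgt p S h' := by
  refine Finset.sum_le_sum fun G hG => ?_
  have hGS := Finset.mem_powerset.1 hG
  have hw : 0 ≤ p ^ G.card * (1 - p) ^ (S.card - G.card) :=
    mul_nonneg (pow_nonneg hp0 _) (pow_nonneg (by linarith) _)
  exact mul_le_mul_of_nonneg_right (hh G hGS) hw

theorem Wgt_one_sub (p : ℝ) (S : Finset V) (h : Finset V → ℝ) :
    Wgt p S (fun G => 1 - h G) = 1 - Wgt p S h := by
  conv_rhs => rw [← Wgt_one p S]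
  unfold Wgt
  rw [← Finset.sum_sub_distrib]
  exact Finset.sum_congr rfl fun G hG => by ring

theorem Wgt_union (p : ℝ) {S₁ S₂ : Finset V} (hdis : Disjoint S₁ S₂)
    (h₁ h₂ : Finset V → ℝ) :
    Wgt p (S₁ ∪ S₂) (fun G => h₁ (G ∩ S₁) * h₂ (G ∩ S₂)) = Wgt p S₁ h₁ * Wgt p S₂ h₂ := by
  induction S₂ using Finset.induction_on generalizing h₂ with
  | empty =>
    rw [Finset.union_empty]
    have e : Wgt p S₁ (fun G => h₁ (G ∩ S₁) * h₂ (G ∩ ∅)) = Wgt p S₁ (fun G => h₁ G * h₂ ∅) :=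
      Wgt_congr p fun G hG => by rw [Finset.inter_empty, Finset.inter_eq_left.2 hG]
    rw [e]
    have h2 : Wgt p (∅ : Finset V) h₂ = h₂ ∅ := by simp [Wgt]
    rw [h2]
    unfold Wgt
    rw [Finset.sum_mul]
    exact Finset.sum_congr rfl fun G hG => by ring
  | @insert x S₂ hx ih =>
    have hxS₁ : x ∉ S₁ := fun hmem =>
      (Finset.disjoint_left.1 hdis hmem) (Finset.mem_insert_self x S₂)
    have hdis' : Disjoint S₁ S₂ := hdis.mono_right (Finset.subset_insert x S₂)
    have hxU : x ∉ S₁ ∪ S₂ := by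
      simp only [Finset.mem_union]
      push_neg
      exact ⟨hxS₁, hx⟩
    have hU : S₁ ∪ insert x S₂ = insert x (S₁ ∪ S₂) := by
      ext y; simp only [Finset.mem_insert, Finset.mem_union]; tauto
    rw [hU, Wgt_insert p hxU]
    have e1 : Wgt p (S₁ ∪ S₂) (fun G => h₁ (insert x G ∩ S₁) * h₂ (insert x G ∩ insert x S₂))
        = Wgt p S₁ h₁ * Wgt p S₂ (fun H => h₂ (insert x H)) := by
      rw [← ih hdis' (fun H => h₂ (insert x H))]
      refine Wgt_congr p fun G hG => ?_
      have hxG : x ∉ G := fun hxx => hxU (hG hxx)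
      rw [Finset.insert_inter_of_notMem hxS₁,
        Finset.insert_inter_of_mem (Finset.mem_insert_self x S₂),
        Finset.inter_insert_of_notMem hxG]
    have e4 : Wgt p (S₁ ∪ S₂) (fun G => h₁ (G ∩ S₁) * h₂ (G ∩ insert x S₂))
        = Wgt p S₁ h₁ * Wgt p S₂ h₂ := by
      rw [← ih hdis' h₂]
      refine Wgt_congr p fun G hG => ?_
      have hxG : x ∉ G := fun hxx => hxU (hG hxx)
      rw [Finset.inter_insert_of_notMem hxG]
    rw [e1, e4, Wgt_insert p hx]
    ring

/-- Iterated factorization over pairwise disjoint regions. -/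
theorem Wgt_prod (p : ℝ) {ι : Type*} [DecidableEq ι] (T : Finset ι) (R : ι → Finset V)
    (h : ι → Finset V → ℝ) :
    ∀ (S : Finset V), (∀ t ∈ T, R t ⊆ S) →
    (∀ t ∈ T, ∀ t' ∈ T, t ≠ t' → Disjoint (R t) (R t')) →
    Wgt p S (fun G => ∏ t ∈ T, h t (G ∩ R t)) = ∏ t ∈ T, Wgt p (R t) (h t) := by
  induction T using Finset.induction_on with
  | empty => intro S _ _; simp [Wgt_one]
  | @insert t T ht ih =>
    intro S hsub hdis
    have htS : R t ⊆ S := hsub t (Finset.mem_insert_self t T)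
    have hS : S = R t ∪ (S \ R t) := (Finset.union_sdiff_of_subset htS).symm
    have hd : Disjoint (R t) (S \ R t) := Finset.disjoint_sdiff
    have hRsub : ∀ s ∈ T, R s ⊆ S \ R t := by
      intro s hs y hy
      refine Finset.mem_sdiff.2 ⟨hsub s (Finset.mem_insert_of_mem hs) hy, fun hyt => ?_⟩
      exact (Finset.disjoint_left.1
        (hdis s (Finset.mem_insert_of_mem hs) t (Finset.mem_insert_self t T)
          (fun he => ht (he ▸ hs))) hy) hyt
    rw [Finset.prod_insert ht]
    have key : Wgt p S (fun G => ∏ s ∈ insert t T, h s (G ∩ R s))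
        = Wgt p (R t) (h t) * Wgt p (S \ R t) (fun H => ∏ s ∈ T, h s (H ∩ R s)) := by
      conv_lhs => rw [hS]
      rw [← Wgt_union p hd (h t) (fun H => ∏ s ∈ T, h s (H ∩ R s))]
      refine Wgt_congr p fun G hG => ?_
      rw [Finset.prod_insert ht]
      congr 1
      refine Finset.prod_congr rfl fun s hs => ?_
      congr 1
      rw [Finset.inter_assoc]
      congr 1
      exact (Finset.inter_eq_right.2 (hRsub s hs)).symm
    rw [key, ih (S \ R t) hRsub
      (fun s hs s' hs' hne => hdis s (Finset.mem_insert_of_mem hs) s'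
        (Finset.mem_insert_of_mem hs') hne)]

open Classical in
theorem Wgt_empty_ind (p : ℝ) (Z : Finset V) :
    Wgt p Z (fun H => if H = ∅ then 1 else 0) = (1 - p) ^ Z.card := by
  unfold Wgt
  rw [Finset.sum_eq_single (∅ : Finset V)]
  · simp
  · intro G hG hne; simp [hne]
  · intro h; exact absurd (Finset.empty_mem_powerset Z) h

open Classical in
theorem Wgt_nonempty_ind (p : ℝ) (A : Finset V) :
    Wgt p A (fun H => if H.Nonempty then 1 else 0) = 1 - (1 - p) ^ A.card := by
  have e : (fun H : Finset V => if H.Nonempty then (1:ℝ) else 0)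
      = fun H => 1 - (if H = ∅ then 1 else 0) := by
    funext H
    by_cases hH : H = ∅
    · simp [hH]
    · simp [hH, Finset.nonempty_iff_ne_empty.2 hH]
  rw [e, Wgt_one_sub, Wgt_empty_ind]


open Classical in
/-- success indicator of one pattern structure -/
noncomputable def eInd {n : ℕ} (Zt : Finset V) (St : Fin n → Finset V) (H : Finset V) : ℝ :=
  if ((H ∩ Zt = ∅) ∧ ∀ i, (H ∩ St i).Nonempty) then 1 else 0

open Classical in
theorem eInd_nonneg {n : ℕ} (Zt : Finset V) (St : Fin n → Finset V) (H : Finset V) :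
    0 ≤ eInd Zt St H := by
  unfold eInd; split <;> norm_num

open Classical in
theorem eInd_le_one {n : ℕ} (Zt : Finset V) (St : Fin n → Finset V) (H : Finset V) :
    eInd Zt St H ≤ 1 := by
  unfold eInd; split <;> norm_num

open Classical in
theorem eInd_eq_one {n : ℕ} {Zt : Finset V} {St : Fin n → Finset V} {H : Finset V}
    (h : eInd Zt St H = 1) : (H ∩ Zt = ∅) ∧ ∀ i, (H ∩ St i).Nonempty := by
  by_contra hcon
  unfold eInd at h
  rw [if_neg hcon] at h
  norm_num at h

open Classical in
theorem Wgt_eInd {n : ℕ} (p : ℝ) (Zt : Finset V) (St : Fin n → Finset V)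
    (hdisZS : Disjoint Zt (Finset.univ.biUnion St))
    (hdisSS : ∀ i j : Fin n, i ≠ j → Disjoint (St i) (St j)) :
    Wgt p (Zt ∪ Finset.univ.biUnion St) (eInd Zt St)
      = (1 - p) ^ Zt.card * ∏ i, (1 - (1 - p) ^ (St i).card) := by
  have hsubB : ∀ i, St i ⊆ Finset.univ.biUnion St := fun i y hy =>
    Finset.mem_biUnion.2 ⟨i, Finset.mem_univ i, hy⟩
  have key : Wgt p (Zt ∪ Finset.univ.biUnion St) (eInd Zt St)
      = Wgt p Zt (fun H => if H = ∅ then (1:ℝ) else 0)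
        * Wgt p (Finset.univ.biUnion St)
            (fun H => ∏ i, (if (H ∩ St i).Nonempty then (1:ℝ) else 0)) := by
    rw [← Wgt_union p hdisZS]
    refine Wgt_congr p fun G hG => ?_
    have e1 : ∀ i, (G ∩ Finset.univ.biUnion St) ∩ St i = G ∩ St i := by
      intro i
      rw [Finset.inter_assoc, Finset.inter_eq_right.2 (hsubB i)]
    have e2 : (∏ i, (if ((G ∩ Finset.univ.biUnion St) ∩ St i).Nonempty then (1:ℝ) else 0))
        = if (∀ i, (G ∩ St i).Nonempty) then 1 else 0 := by
      rw [Finset.prod_boole]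
      congr 1
      simp only [eq_iff_iff]
      constructor
      · intro h i; have := h i (Finset.mem_univ i); rwa [e1 i] at this
      · intro h i _; rw [e1 i]; exact h i
    rw [e2]
    unfold eInd
    by_cases hz : G ∩ Zt = ∅ <;> by_cases hs : ∀ i, (G ∩ St i).Nonempty <;>
      simp [hz, hs]
  rw [key, Wgt_empty_ind]
  congr 1
  rw [Wgt_prod p Finset.univ St (fun _ H => if H.Nonempty then (1:ℝ) else 0)
    (Finset.univ.biUnion St) (fun i _ => hsubB i) (fun i _ j _ hij => hdisSS i j hij)]
  exact Finset.prod_congr rfl fun i _ => Wgt_nonempty_ind p (St i)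

open Classical in
/-- Main probability schema. -/
theorem schema (n : ℕ) (p : ℝ) (hp0 : 0 ≤ p) (hp1 : p ≤ 1) (Ω : Finset V) (T : Finset ℕ)
    (S : ℕ → Fin n → Finset V) (Z : ℕ → Finset V)
    (hRΩ : ∀ t ∈ T, Z t ∪ Finset.univ.biUnion (S t) ⊆ Ω)
    (hdisR : ∀ t ∈ T, ∀ t' ∈ T, t ≠ t' →
      Disjoint (Z t ∪ Finset.univ.biUnion (S t)) (Z t' ∪ Finset.univ.biUnion (S t')))
    (hdisZS : ∀ t ∈ T, Disjoint (Z t) (Finset.univ.biUnion (S t)))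
    (hdisSS : ∀ t ∈ T, ∀ i j : Fin n, i ≠ j → Disjoint (S t i) (S t j))
    (W : Set (Finset V))
    (hW : ∀ G ⊆ Ω, ∀ t ∈ T, (∀ i, (G ∩ S t i).Nonempty) → (G ∩ Z t = ∅) → G ∈ W) :
    1 - ∏ t ∈ T, (1 - (1 - p) ^ (Z t).card * ∏ i, (1 - (1 - p) ^ (S t i).card))
      ≤ Wgt p Ω (Set.indicator W fun _ => 1) := by
  set R : ℕ → Finset V := fun t => Z t ∪ Finset.univ.biUnion (S t) with hR
  have hSsubR : ∀ t, ∀ i, S t i ⊆ R t := fun t i y hy =>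
    Finset.mem_union_right _ (Finset.mem_biUnion.2 ⟨i, Finset.mem_univ i, hy⟩)
  have hZsubR : ∀ t, Z t ⊆ R t := fun t => Finset.subset_union_left
  -- Step 1: pointwise bound
  have step1 : ∀ G ⊆ Ω, 1 - ∏ t ∈ T, (1 - eInd (Z t) (S t) (G ∩ R t))
      ≤ Set.indicator W (fun _ => (1:ℝ)) G := by
    intro G hG
    have hfac : ∀ t ∈ T, 0 ≤ 1 - eInd (Z t) (S t) (G ∩ R t) := fun t _ => by
      have := eInd_le_one (Z t) (S t) (G ∩ R t); linarith
    by_cases hex : ∃ t ∈ T, eInd (Z t) (S t) (G ∩ R t) = 1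
    · obtain ⟨t, htT, het⟩ := hex
      obtain ⟨h1, h2⟩ := eInd_eq_one het
      have hGZ : G ∩ Z t = ∅ := by
        rw [Finset.inter_assoc, Finset.inter_eq_right.2 (hZsubR t)] at h1
        exact h1
      have hGS : ∀ i, (G ∩ S t i).Nonempty := fun i => by
        have := h2 i
        rwa [Finset.inter_assoc, Finset.inter_eq_right.2 (hSsubR t i)] at this
      have hmem : G ∈ W := hW G hG t htT hGS hGZ
      rw [Set.indicator_of_mem hmem]
      have : 0 ≤ ∏ t ∈ T, (1 - eInd (Z t) (S t) (G ∩ R t)) := Finset.prod_nonneg hfac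
      linarith
    · push_neg at hex
      have hall : ∀ t ∈ T, 1 - eInd (Z t) (S t) (G ∩ R t) = 1 := by
        intro t htT
        have h01 : eInd (Z t) (S t) (G ∩ R t) = 0 ∨ eInd (Z t) (S t) (G ∩ R t) = 1 := by
          unfold eInd; split <;> norm_num
        rcases h01 with h | h
        · rw [h]; ring
        · exact absurd h (hex t htT)
      rw [Finset.prod_congr rfl hall, Finset.prod_const_one]
      simp only [sub_self]
      exact Set.indicator_nonneg (fun _ _ => zero_le_one) G
  -- Step 2
  have step2 : Wgt p Ω (fun G => 1 - ∏ t ∈ T, (1 - eInd (Z t) (S t) (G ∩ R t)))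
      = 1 - ∏ t ∈ T, (1 - Wgt p (R t) (eInd (Z t) (S t))) := by
    rw [Wgt_one_sub]
    congr 1
    rw [Wgt_prod p T R (fun t H => 1 - eInd (Z t) (S t) H) Ω hRΩ hdisR]
    exact Finset.prod_congr rfl fun t _ => Wgt_one_sub p (R t) _
  have step3 : ∀ t ∈ T, Wgt p (R t) (eInd (Z t) (S t))
      = (1 - p) ^ (Z t).card * ∏ i, (1 - (1 - p) ^ (S t i).card) := fun t htT =>
    Wgt_eInd p (Z t) (S t) (hdisZS t htT) (hdisSS t htT)
  have efinal : ∏ t ∈ T, (1 - (1 - p) ^ (Z t).card * ∏ i, (1 - (1 - p) ^ (S t i).card))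
      = ∏ t ∈ T, (1 - Wgt p (R t) (eInd (Z t) (S t))) :=
    Finset.prod_congr rfl fun t htT => by rw [step3 t htT]
  calc 1 - ∏ t ∈ T, (1 - (1 - p) ^ (Z t).card * ∏ i, (1 - (1 - p) ^ (S t i).card))
      = Wgt p Ω (fun G => 1 - ∏ t ∈ T, (1 - eInd (Z t) (S t) (G ∩ R t))) := by
        rw [step2, efinal]
    _ ≤ Wgt p Ω (Set.indicator W fun _ => 1) := Wgt_mono p hp0 hp1 step1


end RMIaux

namespace RMI

def tsum {n : ℕ} (i₀ : Fin n) (α : Fin n → ℕ) : ℕ := ∑ i ∈ Finset.univ.erase i₀, α i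

theorem mem_degSet {n D : ℕ} {α : Fin n → ℕ} : α ∈ degSet n D ↔ ∑ i, α i = D :=
  Finset.Nat.mem_antidiagonalTuple

theorem tsum_add {n D : ℕ} (i₀ : Fin n) {α : Fin n → ℕ} (hα : α ∈ degSet n D) :
    α i₀ + tsum i₀ α = D := by
  rw [tsum, Finset.add_sum_erase _ _ (Finset.mem_univ i₀)]
  exact mem_degSet.1 hα

theorem card_erase_univ {n : ℕ} (i₀ : Fin n) : (Finset.univ.erase i₀).card = n - 1 := by
  rw [Finset.card_erase_of_mem (Finset.mem_univ i₀), Finset.card_univ, Fintype.card_fin]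

theorem tsum_le {n : ℕ} (i₀ : Fin n) {α : Fin n → ℕ} {c : ℕ}
    (h : ∀ i, i ≠ i₀ → α i ≤ c) : tsum i₀ α ≤ (n - 1) * c := by
  calc tsum i₀ α ≤ (Finset.univ.erase i₀).card • c :=
        Finset.sum_le_card_nsmul _ _ c (fun i hi => h i (Finset.ne_of_mem_erase hi))
    _ = (n - 1) * c := by rw [card_erase_univ, smul_eq_mul]

theorem le_tsum {n : ℕ} (i₀ : Fin n) {α : Fin n → ℕ} {c : ℕ}
    (h : ∀ i, i ≠ i₀ → c ≤ α i) : (n - 1) * c ≤ tsum i₀ α := by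
  calc (n-1) * c = (Finset.univ.erase i₀).card • c := by rw [card_erase_univ, smul_eq_mul]
    _ ≤ tsum i₀ α := Finset.card_nsmul_le_sum _ _ c (fun i hi => h i (Finset.ne_of_mem_erase hi))


theorem tsum_lt {n : ℕ} (i₀ : Fin n) {α : Fin n → ℕ} {c : ℕ}
    (h : ∀ i, i ≠ i₀ → α i < c) : tsum i₀ α + (n - 1) ≤ (n - 1) * c := by
  have e1 : tsum i₀ α + (n-1) * 1 = ∑ i ∈ Finset.univ.erase i₀, (α i + 1) := by
    rw [Finset.sum_add_distrib, Finset.sum_const, card_erase_univ, smul_eq_mul]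
    rfl
  have e2 : ∑ i ∈ Finset.univ.erase i₀, (α i + 1) ≤ (Finset.univ.erase i₀).card • c :=
    Finset.sum_le_card_nsmul _ _ c (fun i hi => h i (Finset.ne_of_mem_erase hi))
  rw [card_erase_univ, smul_eq_mul] at e2
  omega

end RMI

namespace RMI

variable {n : ℕ}

/-- Occupancy box `A` (near-minimal tail). -/
def boxA (n D δ u : ℕ) (i₀ : Fin n) : Finset (Fin n → ℕ) :=
  (degSet n D).filter (fun α => ∀ i, i ≠ i₀ → (u ≤ α i ∧ α i < u + δ))

/-- Occupancy box `B j`. -/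
def boxB (n D δ u : ℕ) (i₀ j : Fin n) : Finset (Fin n → ℕ) :=
  (degSet n D).filter (fun α => (u + 2*δ ≤ α j ∧ α j < u + 3*δ) ∧
    ∀ i, i ≠ i₀ → i ≠ j → (u + δ ≤ α i ∧ α i < u + 2*δ))

/-- Occupancy boxes indexed by `Fin n`. -/
def boxS (n D δ u : ℕ) (i₀ : Fin n) (i : Fin n) : Finset (Fin n → ℕ) :=
  if i = i₀ then boxA n D δ u i₀ else boxB n D δ u i₀ i

/-- The forbidden (danger) zone. -/
def boxZ (n D δ u : ℕ) (i₀ : Fin n) : Finset (Fin n → ℕ) :=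
  ((degSet n D).filter (fun α => (∀ i, i ≠ i₀ → α i < u + 3*δ) ∧ (n-1)*u < tsum i₀ α))
    \ (Finset.univ.biUnion (boxS n D δ u i₀))

theorem sparse_witness {D δ u : ℕ} (i₀ : Fin n) (hn : 2 ≤ n) (hδ : 1 ≤ δ)
    (hD : (n-1)*u + 3*n*δ ≤ D)
    (G : Finset (Fin n → ℕ)) (hG : G ⊆ degSet n D)
    (hocc : ∀ i, (G ∩ boxS n D δ u i₀ i).Nonempty)
    (hZ : G ∩ boxZ n D δ u i₀ = ∅) :
    ∃ L, IsWitnessSet n G L := by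
  classical
  -- choose the A-point with maximal tail sum
  obtain ⟨a, ha, hamax⟩ := Finset.exists_max_image (G ∩ boxS n D δ u i₀ i₀) (tsum i₀) (hocc i₀)
  -- choose in each B j the point with minimal j-th coordinate
  have hchoice : ∀ j : Fin n, j ≠ i₀ → ∃ b ∈ G ∩ boxS n D δ u i₀ j,
      ∀ c ∈ G ∩ boxS n D δ u i₀ j, b j ≤ c j := fun j _ =>
    Finset.exists_min_image (G ∩ boxS n D δ u i₀ j) (fun c => c j) (hocc j)
  choose bb hbb hbbmin using hchoice
  -- the selection function
  set f : Fin n → (Fin n → ℕ) := fun i => if h : i = i₀ then a else bb i h with hf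
  have hfi₀ : f i₀ = a := by simp [hf]
  have hfj : ∀ j (h : j ≠ i₀), f j = bb j h := by intro j h; simp [hf, h]
  -- membership facts
  have haG : a ∈ G := (Finset.mem_inter.1 ha).1
  have haA : a ∈ boxA n D δ u i₀ := by
    have := (Finset.mem_inter.1 ha).2
    rwa [boxS, if_pos rfl] at this
  have haΩ : a ∈ degSet n D := (Finset.mem_filter.1 haA).1
  have haBox : ∀ i, i ≠ i₀ → (u ≤ a i ∧ a i < u + δ) := (Finset.mem_filter.1 haA).2
  have hbG : ∀ j (h : j ≠ i₀), bb j h ∈ G := fun j h => (Finset.mem_inter.1 (hbb j h)).1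
  have hbB : ∀ j (h : j ≠ i₀), bb j h ∈ boxB n D δ u i₀ j := by
    intro j h
    have := (Finset.mem_inter.1 (hbb j h)).2
    rwa [boxS, if_neg h] at this
  have hbΩ : ∀ j (h : j ≠ i₀), bb j h ∈ degSet n D := fun j h => (Finset.mem_filter.1 (hbB j h)).1
  have hbBoxj : ∀ j (h : j ≠ i₀), u + 2*δ ≤ bb j h j ∧ bb j h j < u + 3*δ :=
    fun j h => ((Finset.mem_filter.1 (hbB j h)).2).1
  have hbBoxo : ∀ j (h : j ≠ i₀), ∀ i, i ≠ i₀ → i ≠ j → (u + δ ≤ bb j h i ∧ bb j h i < u + 2*δ) :=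
    fun j h => ((Finset.mem_filter.1 (hbB j h)).2).2
  -- f-based membership facts
  have hfG : ∀ i, f i ∈ G := by
    intro i
    by_cases h : i = i₀
    · subst h; rw [hfi₀]; exact haG
    · rw [hfj i h]; exact hbG i h
  have hfΩ : ∀ i, f i ∈ degSet n D := fun i => hG (hfG i)
  -- coordinate bounds for f
  have hcoordA : ∀ i, i ≠ i₀ → f i₀ i < u + δ := by
    intro i hi; rw [hfi₀]; exact (haBox i hi).2
  have hcoordBj : ∀ j, j ≠ i₀ → u + 2*δ ≤ f j j ∧ f j j < u + 3*δ := by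
    intro j hj; rw [hfj j hj]; exact hbBoxj j hj
  have hcoordBo : ∀ j, j ≠ i₀ → ∀ i, i ≠ i₀ → i ≠ j → (u + δ ≤ f j i ∧ f j i < u + 2*δ) := by
    intro j hj i h1 h2; rw [hfj j hj]; exact hbBoxo j hj i h1 h2
  -- cross-coordinate comparisons: for i ≠ i₀ and any k ≠ i, f k i < u + 2δ ≤ f i i
  have hkey : ∀ i, i ≠ i₀ → ∀ k, k ≠ i → f k i < f i i := by
    intro i hi k hk
    have hii : u + 2*δ ≤ f i i := (hcoordBj i hi).1
    by_cases hki₀ : k = i₀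
    · subst hki₀
      have := hcoordA i hi
      omega
    · have := (hcoordBo k hki₀ i hi (Ne.symm hk)).2
      omega
  -- tail sums
  have htsA_ub : tsum i₀ (f i₀) + (n-1) ≤ (n-1) * (u + δ) :=
    tsum_lt i₀ (fun i hi => hcoordA i hi)
  have htsA_lb : (n-1) * u ≤ tsum i₀ (f i₀) :=
    le_tsum i₀ (fun i hi => by rw [hfi₀]; exact (haBox i hi).1)
  have htsB_lb : ∀ j, j ≠ i₀ → (n-1)*u + n*δ ≤ tsum i₀ (f j) := by
    intro j hj
    have hjmem : j ∈ Finset.univ.erase i₀ := Finset.mem_erase.2 ⟨hj, Finset.mem_univ j⟩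
    have hsplit : tsum i₀ (f j) = f j j + ∑ i ∈ (Finset.univ.erase i₀).erase j, f j i := by
      rw [tsum, Finset.add_sum_erase _ _ hjmem]
    have hrest : ((Finset.univ.erase i₀).erase j).card • (u + δ)
        ≤ ∑ i ∈ (Finset.univ.erase i₀).erase j, f j i := by
      refine Finset.card_nsmul_le_sum _ _ _ (fun i hi => ?_)
      have hij : i ≠ j := Finset.ne_of_mem_erase hi
      have hii₀ : i ≠ i₀ := Finset.ne_of_mem_erase (Finset.mem_of_mem_erase hi)
      exact (hcoordBo j hj i hii₀ hij).1
    have hcard2 : ((Finset.univ.erase i₀).erase j).card = n - 2 := by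
      rw [Finset.card_erase_of_mem hjmem, card_erase_univ]
      omega
    rw [hcard2, smul_eq_mul] at hrest
    have hjj : u + 2*δ ≤ f j j := (hcoordBj j hj).1
    have hexp : (n-2) * (u + δ) + (u + 2*δ) = (n-1)*u + n*δ := by
      obtain ⟨m, rfl⟩ : ∃ m, n = m + 2 := ⟨n - 2, by omega⟩
      have e1 : m + 2 - 1 = m + 1 := by omega
      have e2 : m + 2 - 2 = m := by omega
      rw [e1, e2]
      ring
    omega
  -- dominance comparisons at i₀
  have hdomi₀ : ∀ j, j ≠ i₀ → f j i₀ < f i₀ i₀ := by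
    intro j hj
    have h1 := tsum_add i₀ (hfΩ j)
    have h2 := tsum_add i₀ (hfΩ i₀)
    have h3 := htsB_lb j hj
    have h4 := htsA_ub
    have e1 : (n-1)*(u+δ) = (n-1)*u + (n-1)*δ := by ring
    have e2 : (n-1)*δ ≤ n*δ := Nat.mul_le_mul_right δ (by omega)
    have hn1 : 1 ≤ n - 1 := by omega
    omega
  -- injectivity of f
  have hinj : Function.Injective f := by
    intro x y hxy
    by_contra hne
    by_cases hx : x = i₀
    · have hy : y ≠ i₀ := fun h => hne (hx.trans h.symm)
      have h1 := hkey y hy x (fun h => hne h)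
      rw [hxy] at h1
      exact absurd h1 (lt_irrefl _)
    · have h1 := hkey x hx y (fun h => hne h.symm)
      rw [hxy] at h1
      exact absurd h1 (lt_irrefl _)
  -- the witness set
  set L : Finset (Fin n → ℕ) := Finset.image f Finset.univ with hL
  have hmemL : ∀ i, f i ∈ L := fun i => Finset.mem_image.2 ⟨i, Finset.mem_univ i, rfl⟩
  have hLmem : ∀ β ∈ L, ∃ i, β = f i := by
    intro β hβ
    obtain ⟨i, _, hi⟩ := Finset.mem_image.1 hβ
    exact ⟨i, hi.symm⟩
  -- lcm computations
  have hlcm : ∀ i, i ≠ i₀ → lcmVec L i = f i i := by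
    intro i hi
    refine le_antisymm ?_ ?_
    · refine Finset.sup_le (fun β hβ => ?_)
      obtain ⟨k, rfl⟩ := hLmem β hβ
      by_cases hk : k = i
      · subst hk; exact le_refl _
      · exact le_of_lt (hkey i hi k hk)
    · exact Finset.le_sup (f := fun β => β i) (hmemL i)
  have hlcmi₀ : lcmVec L i₀ = f i₀ i₀ := by
    refine le_antisymm ?_ ?_
    · refine Finset.sup_le (fun β hβ => ?_)
      obtain ⟨k, rfl⟩ := hLmem β hβ
      by_cases hk : k = i₀
      · subst hk; exact le_refl _
      · exact le_of_lt (hdomi₀ k hk)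
    · exact Finset.le_sup (f := fun β => β i₀) (hmemL i₀)
  refine ⟨L, ?_, ?_, ?_, ?_⟩
  · -- L ⊆ G
    intro β hβ
    obtain ⟨i, rfl⟩ := hLmem β hβ
    exact hfG i
  · -- dominant
    intro α hα
    obtain ⟨i, rfl⟩ := hLmem α hα
    refine ⟨i, fun β hβ hne => ?_⟩
    obtain ⟨k, rfl⟩ := hLmem β hβ
    have hki : k ≠ i := fun h => hne (by rw [h])
    by_cases hi : i = i₀
    · subst hi; exact hdomi₀ k hki
    · exact hkey i hi k hki
  · -- card
    rw [hL, Finset.card_image_of_injective _ hinj, Finset.card_univ, Fintype.card_fin]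
  · -- no strong divisor
    intro g hgG hsd
    have hgΩ : g ∈ degSet n D := hG hgG
    have hgts := tsum_add i₀ hgΩ
    -- small coordinates off i₀
    have hgsmall : ∀ i, i ≠ i₀ → g i < u + 3*δ := by
      intro i hi
      by_cases hgi : g i = 0
      · omega
      · have := hsd i hgi
        rw [hlcm i hi] at this
        have := (hcoordBj i hi).2
        omega
    by_cases hts : tsum i₀ g ≤ (n-1)*u
    · -- far case: g i₀ is large
      have hgi₀ : D - (n-1)*u ≤ g i₀ := by omega
      have hg0 : g i₀ ≠ 0 := by
        have : 0 < D - (n-1)*u := by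
          have hnδ : 0 < 3*n*δ := by positivity
          omega
        omega
      have := hsd i₀ hg0
      rw [hlcmi₀] at this
      have h2 := tsum_add i₀ (hfΩ i₀)
      have h3 := htsA_lb
      omega
    · -- g is in the shell
      push_neg at hts
      have hgpre : g ∈ (degSet n D).filter
          (fun α => (∀ i, i ≠ i₀ → α i < u + 3*δ) ∧ (n-1)*u < tsum i₀ α) :=
        Finset.mem_filter.2 ⟨hgΩ, hgsmall, hts⟩
      have hgbi : g ∈ Finset.univ.biUnion (boxS n D δ u i₀) := by
        by_contra hgnot
        have : g ∈ boxZ n D δ u i₀ := Finset.mem_sdiff.2 ⟨hgpre, hgnot⟩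
        have : g ∈ G ∩ boxZ n D δ u i₀ := Finset.mem_inter.2 ⟨hgG, this⟩
        rw [hZ] at this
        exact absurd this (Finset.notMem_empty g)
      obtain ⟨i, _, hgSi⟩ := Finset.mem_biUnion.1 hgbi
      by_cases hi : i = i₀
      · -- g ∈ boxA: contradiction with maximality of tsum a
        rw [hi] at hgSi
        rw [boxS, if_pos rfl] at hgSi
        have hgmem : g ∈ G ∩ boxS n D δ u i₀ i₀ := by
          rw [boxS, if_pos rfl]; exact Finset.mem_inter.2 ⟨hgG, hgSi⟩
        have hmax := hamax g hgmem
        have hgA := (Finset.mem_filter.1 hgSi).2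
        have hg0 : g i₀ ≠ 0 := by
          have h1 : tsum i₀ g ≤ (n-1)*(u + δ - 1) :=
            tsum_le i₀ (fun k hk => by have := (hgA k hk).2; omega)
          have h2 : (n-1)*(u+δ-1) ≤ (n-1)*u + (n-1)*δ := by
            have : u + δ - 1 ≤ u + δ := by omega
            calc (n-1)*(u+δ-1) ≤ (n-1)*(u+δ) := Nat.mul_le_mul_left _ this
              _ = (n-1)*u + (n-1)*δ := by ring
          have h3 : (n-1)*δ + δ ≤ n * δ := by
            have : (n-1) + 1 ≤ n := by omega
            calc (n-1)*δ + δ = ((n-1)+1)*δ := by ring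
              _ ≤ n*δ := Nat.mul_le_mul_right δ this
          have h6 : n * δ ≤ 3 * n * δ := Nat.mul_le_mul_right δ (by omega : n ≤ 3*n)
          omega
        have hlt := hsd i₀ hg0
        rw [hlcmi₀, hfi₀] at hlt
        have h4 : tsum i₀ g ≤ tsum i₀ a := hmax
        have h5 : a i₀ + tsum i₀ a = D := tsum_add i₀ haΩ
        omega
      · -- g ∈ boxB i: contradiction with minimality
        rw [boxS, if_neg hi] at hgSi
        have hgmem : g ∈ G ∩ boxS n D δ u i₀ i := by
          rw [boxS, if_neg hi]; exact Finset.mem_inter.2 ⟨hgG, hgSi⟩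
        have hmin := hbbmin i hi g hgmem
        have hgB := (Finset.mem_filter.1 hgSi).2
        have hg0 : g i ≠ 0 := by
          have := hgB.1.1
          omega
        have := hsd i hg0
        rw [hlcm i hi, hfj i hi] at this
        omega

end RMI

namespace RMI

/-- Dense-case rigid pattern: base vector. -/
def patC (n D w : ℕ) (i₀ : Fin n) : Fin n → ℕ :=
  fun i => if i = i₀ then D - 1 - (n-1)*w else w

/-- Dense-case rigid pattern points. -/
def patP (n D w : ℕ) (i₀ i : Fin n) : Fin n → ℕ :=
  fun k => patC n D w i₀ k + if k = i then 1 else 0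

theorem tsum_patC {n D w : ℕ} (i₀ : Fin n) : tsum i₀ (patC n D w i₀) = (n-1)*w := by
  rw [tsum]
  have : ∀ i ∈ Finset.univ.erase i₀, patC n D w i₀ i = w := by
    intro i hi
    rw [patC, if_neg (Finset.ne_of_mem_erase hi)]
  rw [Finset.sum_congr rfl this, Finset.sum_const, card_erase_univ, smul_eq_mul]

theorem sum_patC {n D w : ℕ} (i₀ : Fin n) (hw : (n-1)*w + 1 ≤ D) :
    ∑ i, patC n D w i₀ i = D - 1 := by
  rw [← Finset.add_sum_erase _ _ (Finset.mem_univ i₀)]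
  have h1 : patC n D w i₀ i₀ = D - 1 - (n-1)*w := by rw [patC, if_pos rfl]
  have h2 : ∑ i ∈ Finset.univ.erase i₀, patC n D w i₀ i = (n-1)*w := tsum_patC i₀
  rw [h1, h2]
  omega

theorem patP_mem {n D w : ℕ} (i₀ : Fin n) (hn : 1 ≤ n) (hw : (n-1)*w + 1 ≤ D) (i : Fin n) :
    patP n D w i₀ i ∈ degSet n D := by
  rw [mem_degSet]
  have e : ∀ k, patP n D w i₀ i k = patC n D w i₀ k + if k = i then 1 else 0 := fun k => rfl
  rw [Finset.sum_congr rfl (fun k _ => e k), Finset.sum_add_distrib, sum_patC i₀ hw,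
    Finset.sum_ite_eq' Finset.univ i (fun _ => 1), if_pos (Finset.mem_univ i)]
  omega

theorem dense_witness {D w : ℕ} (i₀ : Fin n) (hn : 2 ≤ n) (hw : (n-1)*w + 1 ≤ D)
    (G : Finset (Fin n → ℕ)) (hG : G ⊆ degSet n D)
    (hocc : ∀ i, patP n D w i₀ i ∈ G) :
    ∃ L, IsWitnessSet n G L := by
  classical
  set c := patC n D w i₀ with hc
  set f : Fin n → (Fin n → ℕ) := patP n D w i₀ with hfdef
  have hfval : ∀ i k, f i k = c k + if k = i then 1 else 0 := fun i k => rfl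
  have hkey : ∀ i k, k ≠ i → f k i < f i i := by
    intro i k hk
    have h1 : f k i = c i + if i = k then 1 else 0 := rfl
    have h2 : f i i = c i + 1 := by rw [hfval, if_pos rfl]
    rw [h1, h2, if_neg (fun h => hk h.symm)]
    omega
  have hinj : Function.Injective f := by
    intro x y hxy
    by_contra hne
    have h1 := hkey x y (fun h => hne h.symm)
    rw [hxy] at h1
    exact absurd h1 (lt_irrefl _)
  set L : Finset (Fin n → ℕ) := Finset.image f Finset.univ with hL
  have hmemL : ∀ i, f i ∈ L := fun i => Finset.mem_image.2 ⟨i, Finset.mem_univ i, rfl⟩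
  have hLmem : ∀ β ∈ L, ∃ i, β = f i := by
    intro β hβ
    obtain ⟨i, _, hi⟩ := Finset.mem_image.1 hβ
    exact ⟨i, hi.symm⟩
  have hlcm : ∀ i, lcmVec L i = c i + 1 := by
    intro i
    refine le_antisymm ?_ ?_
    · refine Finset.sup_le (fun β hβ => ?_)
      obtain ⟨k, rfl⟩ := hLmem β hβ
      rw [hfval]
      split <;> omega
    · have : c i + 1 = f i i := by rw [hfval, if_pos rfl]
      rw [this]
      exact Finset.le_sup (f := fun β => β i) (hmemL i)
  refine ⟨L, ?_, ?_, ?_, ?_⟩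
  · intro β hβ
    obtain ⟨i, rfl⟩ := hLmem β hβ
    exact hocc i
  · intro α hα
    obtain ⟨i, rfl⟩ := hLmem α hα
    refine ⟨i, fun β hβ hne => ?_⟩
    obtain ⟨k, rfl⟩ := hLmem β hβ
    exact hkey i k (fun h => hne (by rw [h]))
  · rw [hL, Finset.card_image_of_injective _ hinj, Finset.card_univ, Fintype.card_fin]
  · intro g hgG hsd
    have hgΩ : g ∈ degSet n D := hG hgG
    have hgsum : ∑ i, g i = D := mem_degSet.1 hgΩ
    have hle : ∀ i, g i ≤ c i := by
      intro i
      by_cases hgi : g i = 0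
      · omega
      · have := hsd i hgi
        rw [hlcm i] at this
        omega
    have : ∑ i, g i ≤ ∑ i, c i := Finset.sum_le_sum (fun i _ => hle i)
    rw [hgsum, sum_patC i₀ hw] at this
    omega

end RMI

namespace RMI

/-- Generic lower bound for the cardinality of a filtered box in `degSet`. -/
theorem card_filter_ge {n : ℕ} (D : ℕ) (i₀ : Fin n) (P : Fin n → Finset ℕ)
    (pred : (Fin n → ℕ) → Prop) [DecidablePred pred]
    (hP0 : ∀ x ∈ P i₀, x = 0)
    (hsum : ∀ y ∈ Fintype.piFinset P, tsum i₀ y ≤ D)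
    (hpred : ∀ y ∈ Fintype.piFinset P,
      pred (fun i => if i = i₀ then D - tsum i₀ y else y i)) :
    ∏ i, (P i).card ≤ ((degSet n D).filter pred).card := by
  rw [← Fintype.card_piFinset]
  refine Finset.card_le_card_of_injOn
    (fun y => fun i => if i = i₀ then D - tsum i₀ y else y i) (fun y hy => ?_) ?_
  · refine Finset.mem_filter.2 ⟨?_, hpred y hy⟩
    rw [mem_degSet, ← Finset.add_sum_erase _ _ (Finset.mem_univ i₀)]
    show (if i₀ = i₀ then D - tsum i₀ y else y i₀) +
        ∑ i ∈ Finset.univ.erase i₀, (if i = i₀ then D - tsum i₀ y else y i) = D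
    have hg : (if i₀ = i₀ then D - tsum i₀ y else y i₀) = D - tsum i₀ y := if_pos rfl
    rw [hg]
    have e : ∑ i ∈ Finset.univ.erase i₀,
        (if i = i₀ then D - tsum i₀ y else y i) = tsum i₀ y := by
      rw [tsum]
      exact Finset.sum_congr rfl (fun i hi => if_neg (Finset.ne_of_mem_erase hi))
    rw [e]
    exact Nat.sub_add_cancel (hsum y hy)
  · intro y hy y' hy' heq
    funext i
    by_cases hi : i = i₀
    · have h1 : y i = 0 := hP0 _ (by rw [hi]; exact Fintype.mem_piFinset.1 hy i₀)
      have h2 : y' i = 0 := hP0 _ (by rw [hi]; exact Fintype.mem_piFinset.1 hy' i₀)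
      rw [h1, h2]
    · have := congrFun heq i
      simpa [if_neg hi] using this

theorem prod_card_ite {n : ℕ} (i₀ : Fin n) (c : ℕ) (Q : Fin n → Finset ℕ)
    (hQ0 : (Q i₀).card = 1) (hQ : ∀ i, i ≠ i₀ → (Q i).card = c) :
    ∏ i, (Q i).card = c ^ (n-1) := by
  rw [← Finset.mul_prod_erase _ _ (Finset.mem_univ i₀), hQ0, one_mul]
  have e : ∀ i ∈ Finset.univ.erase i₀, (Q i).card = c := fun i hi =>
    hQ i (Finset.ne_of_mem_erase hi)
  rw [Finset.prod_congr rfl e, Finset.prod_const, card_erase_univ]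

open Classical in
theorem card_boxA_ge {n D δ u : ℕ} (i₀ : Fin n) (hD : (n-1)*u + 3*n*δ ≤ D) (hδ : 1 ≤ δ) :
    δ ^ (n-1) ≤ (boxA n D δ u i₀).card := by
  have hnδ : (n-1) * (u + δ) ≤ (n-1)*u + 3*n*δ := by
    have e1 : (n-1)*(u+δ) = (n-1)*u + (n-1)*δ := by ring
    have e2 : (n-1)*δ ≤ 3*n*δ := Nat.mul_le_mul_right δ (by omega)
    omega
  set P : Fin n → Finset ℕ := fun i => if i = i₀ then {0} else Finset.Ico u (u + δ) with hP
  have hcards : ∏ i, (P i).card = δ ^ (n-1) := by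
    refine prod_card_ite i₀ δ P ?_ ?_
    · rw [hP]; simp
    · intro i hi; rw [hP]; simp [if_neg hi]
  rw [boxA, ← hcards]
  have hmem : ∀ y ∈ Fintype.piFinset P, ∀ i, i ≠ i₀ → (u ≤ y i ∧ y i < u + δ) := by
    intro y hy i hi
    have := Fintype.mem_piFinset.1 hy i
    rw [hP] at this
    simp only [if_neg hi, Finset.mem_Ico] at this
    exact this
  have hsum : ∀ y ∈ Fintype.piFinset P, tsum i₀ y ≤ D := by
    intro y hy
    have h1 : tsum i₀ y ≤ (n-1) * (u+δ) := tsum_le i₀ (fun i hi => le_of_lt (hmem y hy i hi).2)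
    omega
  refine card_filter_ge D i₀ P _ ?_ hsum ?_
  · intro x hx; rw [hP] at hx; simpa using hx
  · intro y hy i hi
    simp only [if_neg hi]
    exact hmem y hy i hi

open Classical in
theorem card_boxB_ge {n D δ u : ℕ} (i₀ j : Fin n) (hj : j ≠ i₀)
    (hD : (n-1)*u + 3*n*δ ≤ D) (hδ : 1 ≤ δ) :
    δ ^ (n-1) ≤ (boxB n D δ u i₀ j).card := by
  have hnδ : (n-1) * (u + 3*δ) ≤ (n-1)*u + 3*n*δ := by
    have e1 : (n-1)*(u+3*δ) = (n-1)*u + (n-1)*(3*δ) := by ring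
    have e2 : (n-1)*(3*δ) ≤ 3*n*δ := by
      have : (n-1)*(3*δ) = 3*(n-1)*δ := by ring
      rw [this]
      exact Nat.mul_le_mul_right δ (by omega)
    omega
  set P : Fin n → Finset ℕ := fun i => if i = i₀ then {0}
    else if i = j then Finset.Ico (u + 2*δ) (u + 3*δ) else Finset.Ico (u + δ) (u + 2*δ) with hP
  have hcards : ∏ i, (P i).card = δ ^ (n-1) := by
    refine prod_card_ite i₀ δ P ?_ ?_
    · rw [hP]; simp
    · intro i hi
      rw [hP]
      simp only [if_neg hi]
      by_cases hij : i = j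
      · rw [if_pos hij, Nat.card_Ico]; omega
      · rw [if_neg hij, Nat.card_Ico]; omega
  rw [boxB, ← hcards]
  have hmemj : ∀ y ∈ Fintype.piFinset P, u + 2*δ ≤ y j ∧ y j < u + 3*δ := by
    intro y hy
    have := Fintype.mem_piFinset.1 hy j
    rw [hP] at this
    simp only [if_neg hj, if_pos rfl, eq_self_iff_true, if_true, Finset.mem_Ico] at this
    exact this
  have hmemo : ∀ y ∈ Fintype.piFinset P, ∀ i, i ≠ i₀ → i ≠ j → (u + δ ≤ y i ∧ y i < u + 2*δ) := by
    intro y hy i hi hij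
    have := Fintype.mem_piFinset.1 hy i
    rw [hP] at this
    simp only [if_neg hi, if_neg hij, Finset.mem_Ico] at this
    exact this
  have hsum : ∀ y ∈ Fintype.piFinset P, tsum i₀ y ≤ D := by
    intro y hy
    have h1 : tsum i₀ y ≤ (n-1) * (u+3*δ) := by
      refine tsum_le i₀ (fun i hi => ?_)
      by_cases hij : i = j
      · subst hij; exact le_of_lt (hmemj y hy).2
      · have := (hmemo y hy i hi hij).2; omega
    omega
  refine card_filter_ge D i₀ P _ ?_ hsum ?_
  · intro x hx; rw [hP] at hx; simpa using hx
  · intro y hy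
    refine ⟨?_, ?_⟩
    · simp only [if_neg hj]; exact hmemj y hy
    · intro i hi hij
      simp only [if_neg hi]
      exact hmemo y hy i hi hij

open Classical in
theorem card_boxZ_le {n D δ u : ℕ} (i₀ : Fin n) (hδ : 1 ≤ δ) (hn : 2 ≤ n) :
    (boxZ n D δ u i₀).card ≤ (4*n*δ) ^ (n-1) := by
  obtain ⟨w, hw3⟩ : ∃ w, 3*δ = w + 1 := ⟨3*δ - 1, by omega⟩
  set Q : Fin n → Finset ℕ := fun i => if i = i₀ then {0} else Finset.range ((n-1)*w + 1) with hQ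
  have hcards : ∏ i, (Q i).card = ((n-1)*w + 1) ^ (n-1) := by
    refine prod_card_ite i₀ _ Q ?_ ?_
    · rw [hQ]; simp
    · intro i hi; rw [hQ]; simp [if_neg hi]
  have hble : ((n-1)*w + 1) ^ (n-1) ≤ (4*n*δ) ^ (n-1) := by
    refine Nat.pow_le_pow_left ?_ _
    have h1 : (n-1)*w + 1 ≤ (n-1)*(w+1) := by
      have : (n-1)*(w+1) = (n-1)*w + (n-1) := by ring
      omega
    have h2 : (n-1)*(w+1) = (n-1)*(3*δ) := by rw [hw3]
    have h3 : (n-1)*(3*δ) ≤ 4*n*δ := by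
      have e : (n-1)*(3*δ) = (3*(n-1))*δ := by ring
      rw [e]
      exact Nat.mul_le_mul_right δ (by omega)
    omega
  refine le_trans ?_ hble
  rw [← hcards, ← Fintype.card_piFinset]
  refine Finset.card_le_card_of_injOn (fun α => fun i => if i = i₀ then 0 else (u + w) - α i)
    (fun α hα => ?_) ?_
  · -- membership in the target box
    obtain ⟨hαpre, -⟩ := Finset.mem_sdiff.1 hα
    obtain ⟨hαΩ, hsmall, hts⟩ := Finset.mem_filter.1 hαpre
    rw [Finset.mem_coe, Fintype.mem_piFinset]
    intro i
    show (if i = i₀ then 0 else (u + w) - α i) ∈ Q i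
    by_cases hi : i = i₀
    · rw [hQ]; simp [hi]
    · rw [hQ]
      simp only [if_neg hi]
      rw [Finset.mem_range]
      -- z i ≤ ∑ z < (n-1)*w
      have hzsum : (∑ k ∈ Finset.univ.erase i₀, ((u + w) - α k)) + tsum i₀ α
          = (n-1)*(u + w) := by
        rw [tsum, ← Finset.sum_add_distrib]
        have e : ∀ k ∈ Finset.univ.erase i₀, ((u + w) - α k) + α k = u + w := by
          intro k hk
          have := hsmall k (Finset.ne_of_mem_erase hk)
          omega
        rw [Finset.sum_congr rfl e, Finset.sum_const, card_erase_univ, smul_eq_mul]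
      have hsingle : (u + w) - α i ≤ ∑ k ∈ Finset.univ.erase i₀, ((u + w) - α k) :=
        Finset.single_le_sum (f := fun k => (u + w) - α k) (fun k _ => Nat.zero_le _)
          (Finset.mem_erase.2 ⟨hi, Finset.mem_univ i⟩)
      have hexpand : (n-1)*(u+w) = (n-1)*u + (n-1)*w := by ring
      omega
  · -- injectivity
    intro α hα α' hα' heq
    obtain ⟨hαpre, -⟩ := Finset.mem_sdiff.1 hα
    obtain ⟨hαΩ, hsmall, -⟩ := Finset.mem_filter.1 hαpre
    obtain ⟨hα'pre, -⟩ := Finset.mem_sdiff.1 hα'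
    obtain ⟨hα'Ω, hsmall', -⟩ := Finset.mem_filter.1 hα'pre
    have hco : ∀ i, i ≠ i₀ → α i = α' i := by
      intro i hi
      have := congrFun heq i
      simp only [if_neg hi] at this
      have b1 := hsmall i hi
      have b2 := hsmall' i hi
      omega
    have hts : tsum i₀ α = tsum i₀ α' := by
      rw [tsum, tsum]
      exact Finset.sum_congr rfl (fun k hk => hco k (Finset.ne_of_mem_erase hk))
    have h1 := tsum_add i₀ hαΩ
    have h2 := tsum_add i₀ hα'Ω
    funext i
    by_cases hi : i = i₀
    · subst hi; omega
    · exact hco i hi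

end RMI

namespace RMI

/-- region of one sparse structure -/
def regionR (n D δ u : ℕ) (i₀ : Fin n) : Finset (Fin n → ℕ) :=
  boxZ n D δ u i₀ ∪ Finset.univ.biUnion (boxS n D δ u i₀)

theorem regionR_subset {n D δ u : ℕ} (i₀ : Fin n) : regionR n D δ u i₀ ⊆ degSet n D := by
  intro α hα
  rcases Finset.mem_union.1 hα with h | h
  · exact Finset.mem_filter.1 (Finset.mem_sdiff.1 h).1 |>.1
  · obtain ⟨i, _, hi⟩ := Finset.mem_biUnion.1 h
    rw [boxS] at hi
    split at hi
    · exact (Finset.mem_filter.1 hi).1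
    · exact (Finset.mem_filter.1 hi).1

theorem tsum_region {n D δ u : ℕ} (i₀ : Fin n) (hn : 2 ≤ n) {α : Fin n → ℕ}
    (hα : α ∈ regionR n D δ u i₀) :
    (n-1)*u ≤ tsum i₀ α ∧ tsum i₀ α + 1 ≤ (n-1)*(u + 3*δ) := by
  have hub : (∀ i, i ≠ i₀ → α i < u + 3*δ) → tsum i₀ α + 1 ≤ (n-1)*(u+3*δ) := by
    intro h
    have := tsum_lt i₀ h
    omega
  rcases Finset.mem_union.1 hα with h | h
  · obtain ⟨hpre, -⟩ := Finset.mem_sdiff.1 h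
    obtain ⟨-, hsmall, hts⟩ := Finset.mem_filter.1 hpre
    exact ⟨le_of_lt hts, hub hsmall⟩
  · obtain ⟨i, -, hi⟩ := Finset.mem_biUnion.1 h
    rw [boxS] at hi
    split at hi
    · obtain ⟨-, hbox⟩ := Finset.mem_filter.1 hi
      refine ⟨le_tsum i₀ (fun k hk => (hbox k hk).1), hub (fun k hk => ?_)⟩
      have := (hbox k hk).2
      omega
    · obtain ⟨-, hbj, hbo⟩ := Finset.mem_filter.1 hi
      constructor
      · refine le_tsum i₀ (fun k hk => ?_)
        by_cases hki : k = i
        · subst hki; omega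
        · have := (hbo k hk hki).1; omega
      · refine hub (fun k hk => ?_)
        by_cases hki : k = i
        · subst hki; omega
        · have := (hbo k hk hki).2; omega

theorem regionR_disjoint {n D δ u u' : ℕ} (i₀ : Fin n) (hn : 2 ≤ n)
    (huu : u + 3*δ ≤ u') :
    Disjoint (regionR n D δ u i₀) (regionR n D δ u' i₀) := by
  rw [Finset.disjoint_left]
  intro α h1 h2
  have b1 := (tsum_region i₀ hn h1).2
  have b2 := (tsum_region i₀ hn h2).1
  have : (n-1)*(u+3*δ) ≤ (n-1)*u' := Nat.mul_le_mul_left _ huu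
  omega

theorem boxS_disjoint {n D δ u : ℕ} (i₀ : Fin n) {i j : Fin n} (hij : i ≠ j) :
    Disjoint (boxS n D δ u i₀ i) (boxS n D δ u i₀ j) := by
  rw [Finset.disjoint_left]
  intro α h1 h2
  rw [boxS] at h1 h2
  by_cases hi : i = i₀
  · rw [if_pos hi] at h1
    have hji : j ≠ i₀ := fun h => hij (hi.trans h.symm)
    rw [if_neg hji] at h2
    have a1 := (Finset.mem_filter.1 h1).2 j hji
    have a2 := ((Finset.mem_filter.1 h2).2).1
    omega
  · rw [if_neg hi] at h1
    by_cases hj : j = i₀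
    · rw [if_pos hj] at h2
      have a1 := ((Finset.mem_filter.1 h1).2).1
      have a2 := (Finset.mem_filter.1 h2).2 i hi
      omega
    · rw [if_neg hj] at h2
      have a1 := ((Finset.mem_filter.1 h1).2).1
      have a2 := ((Finset.mem_filter.1 h2).2).2 i hi hij
      omega

theorem boxZ_disjoint_biUnion {n D δ u : ℕ} (i₀ : Fin n) :
    Disjoint (boxZ n D δ u i₀) (Finset.univ.biUnion (boxS n D δ u i₀)) :=
  Finset.sdiff_disjoint

-- dense-case structures
def denseS (n D w : ℕ) (i₀ i : Fin n) : Finset (Fin n → ℕ) := {patP n D w i₀ i}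

def denseR (n D w : ℕ) (i₀ : Fin n) : Finset (Fin n → ℕ) :=
  (∅ : Finset (Fin n → ℕ)) ∪ Finset.univ.biUnion (denseS n D w i₀)

theorem tsum_patP {n D w : ℕ} (i₀ i : Fin n) :
    (n-1)*w ≤ tsum i₀ (patP n D w i₀ i) ∧ tsum i₀ (patP n D w i₀ i) ≤ (n-1)*w + 1 := by
  have e : tsum i₀ (patP n D w i₀ i)
      = (n-1)*w + ∑ k ∈ Finset.univ.erase i₀, (if k = i then 1 else 0) := by
    rw [tsum]
    have : ∀ k ∈ Finset.univ.erase i₀,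
        patP n D w i₀ i k = patC n D w i₀ k + (if k = i then 1 else 0) := fun k _ => rfl
    rw [Finset.sum_congr rfl this, Finset.sum_add_distrib, ← tsum, tsum_patC]
  have hle : ∑ k ∈ Finset.univ.erase i₀, (if k = i then (1:ℕ) else 0) ≤ 1 := by
    rw [Finset.sum_ite_eq' (Finset.univ.erase i₀) i (fun _ => 1)]
    split <;> omega
  omega

theorem denseR_subset {n D w : ℕ} (i₀ : Fin n) (hn : 1 ≤ n) (hw : (n-1)*w + 1 ≤ D) :
    denseR n D w i₀ ⊆ degSet n D := by
  intro α hα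
  rcases Finset.mem_union.1 hα with h | h
  · exact absurd h (Finset.notMem_empty α)
  · obtain ⟨i, -, hi⟩ := Finset.mem_biUnion.1 h
    rw [denseS, Finset.mem_singleton] at hi
    subst hi
    exact patP_mem i₀ hn hw i

theorem denseS_disjoint {n D w : ℕ} (i₀ : Fin n) {i j : Fin n} (hij : i ≠ j) :
    Disjoint (denseS n D w i₀ i) (denseS n D w i₀ j) := by
  rw [denseS, denseS, Finset.disjoint_singleton]
  intro h
  have := congrFun h i
  have e1 : patP n D w i₀ i i = patC n D w i₀ i + 1 := by
    rw [patP, if_pos rfl]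
  have e2 : patP n D w i₀ j i = patC n D w i₀ i + 0 := by
    rw [patP, if_neg hij]
  omega

theorem denseR_disjoint {n D w w' : ℕ} (i₀ : Fin n) (hn : 2 ≤ n) (hww : w + 2 ≤ w') :
    Disjoint (denseR n D w i₀) (denseR n D w' i₀) := by
  rw [Finset.disjoint_left]
  intro α h1 h2
  rcases Finset.mem_union.1 h1 with h | h
  · exact absurd h (Finset.notMem_empty α)
  rcases Finset.mem_union.1 h2 with h' | h'
  · exact absurd h' (Finset.notMem_empty α)
  obtain ⟨i, -, hi⟩ := Finset.mem_biUnion.1 h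
  obtain ⟨j, -, hj⟩ := Finset.mem_biUnion.1 h'
  rw [denseS, Finset.mem_singleton] at hi hj
  have b1 := tsum_patP (n := n) (D := D) (w := w) i₀ i
  have b2 := tsum_patP (n := n) (D := D) (w := w') i₀ j
  rw [← hi] at b1
  rw [← hj] at b2
  have : (n-1)*(w+2) ≤ (n-1)*w' := Nat.mul_le_mul_left _ hww
  have e : (n-1)*(w+2) = (n-1)*w + (n-1)*2 := by ring
  have hn1 : 1 ≤ n - 1 := by omega
  have : 2 ≤ (n-1)*2 := by omega
  omega

end RMI


namespace RMI

theorem pow_one_sub_ge (p : ℝ) (hp0 : 0 ≤ p) (hp1 : p ≤ 1) (N : ℕ) :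
    1 - (N:ℝ)*p ≤ (1-p)^N := by
  have h := one_add_mul_le_pow (a := -p) (by linarith) N
  have e : (1:ℝ) + -p = 1 - p := by ring
  rw [e] at h
  linarith

theorem pow_one_sub_le (p : ℝ) (hp0 : 0 ≤ p) (hp1 : p ≤ 1) (N : ℕ) :
    (1 + (N:ℝ)*p) * (1-p)^N ≤ 1 := by
  have h1 : 1 + (N:ℝ)*p ≤ (1+p)^N := one_add_mul_le_pow (by linarith) N
  have h2 : (0:ℝ) ≤ (1-p)^N := pow_nonneg (by linarith) N
  calc (1 + (N:ℝ)*p) * (1-p)^N ≤ (1+p)^N * (1-p)^N := mul_le_mul_of_nonneg_right h1 h2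
    _ = ((1+p)*(1-p))^N := (mul_pow _ _ _).symm
    _ ≤ 1 := by
        refine pow_le_one₀ (by nlinarith) (by nlinarith)

theorem occupancy_ge (p : ℝ) (hp0 : 0 ≤ p) (hp1 : p ≤ 1) (N : ℕ) (ε : ℝ)
    (hε0 : 0 ≤ ε) (hε1 : ε ≤ 1) (hεN : ε ≤ (N:ℝ)*p) : ε/2 ≤ 1 - (1-p)^N := by
  have hNp : (0:ℝ) ≤ (N:ℝ)*p := le_trans hε0 hεN
  have hpos : (0:ℝ) < 1 + (N:ℝ)*p := by linarith
  have h2 := pow_one_sub_le p hp0 hp1 N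
  have hle : (1-p)^N ≤ 1/(1 + (N:ℝ)*p) := by
    rw [le_div_iff₀ hpos]
    linarith
  have h3 : ε/2 ≤ ((N:ℝ)*p)/(1+(N:ℝ)*p) := by
    rw [div_le_div_iff₀ (by norm_num) hpos]
    nlinarith
  have h4 : ((N:ℝ)*p)/(1+(N:ℝ)*p) = 1 - 1/(1+(N:ℝ)*p) := by
    field_simp
    ring
  linarith

theorem prod_le_pow_card' {ι : Type*} (T : Finset ι) (f : ι → ℝ) (c : ℝ)
    (h0 : ∀ t ∈ T, 0 ≤ f t) (hc : ∀ t ∈ T, f t ≤ c) : ∏ t ∈ T, f t ≤ c ^ T.card := by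
  calc ∏ t ∈ T, f t ≤ ∏ _t ∈ T, c := Finset.prod_le_prod h0 hc
    _ = c ^ T.card := Finset.prod_const c

/-- The sparse-regime master bound. -/
theorem sparse_master {n D δ M : ℕ} (i₀ : Fin n) (p : ℝ)
    (hn : 2 ≤ n) (hp0 : 0 ≤ p) (hp1 : p ≤ 1) (hδ : 1 ≤ δ) (hM : 3*n*δ*M ≤ D) :
    1 - (1 - (1-p)^((4*n*δ)^(n-1)) * (1 - (1-p)^(δ^(n-1)))^n)^M
      ≤ grmPr n D p {G | ∃ L, IsWitnessSet n G L} := by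
  classical
  have hq0 : (0:ℝ) ≤ 1 - p := by linarith
  have hq1 : 1 - p ≤ 1 := by linarith
  set βs : ℝ := (1-p)^((4*n*δ)^(n-1)) * (1 - (1-p)^(δ^(n-1)))^n with hβs
  have hqpow1 : ∀ N : ℕ, (1-p)^N ≤ 1 := fun N => pow_le_one₀ hq0 hq1
  have hqpow0 : ∀ N : ℕ, 0 ≤ (1-p)^N := fun N => pow_nonneg hq0 N
  have hβs0 : 0 ≤ βs := mul_nonneg (hqpow0 _) (pow_nonneg (by have := hqpow1 (δ^(n-1)); linarith) _)
  have hβs1 : βs ≤ 1 := by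
    have h1 : (1-p)^((4*n*δ)^(n-1)) ≤ 1 := hqpow1 _
    have h2 : (1 - (1-p)^(δ^(n-1)))^n ≤ 1 :=
      pow_le_one₀ (by have := hqpow1 (δ^(n-1)); linarith) (by have := hqpow0 (δ^(n-1)); linarith)
    have h0 : (0:ℝ) ≤ (1 - (1-p)^(δ^(n-1)))^n :=
      pow_nonneg (by have := hqpow1 (δ^(n-1)); linarith) n
    rw [hβs]
    exact mul_le_one₀ h1 h0 h2
  have hC1 : ∀ t, t < M → (n-1)*(3*δ*t) + 3*n*δ ≤ D := by
    intro t ht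
    have e1 : (n-1)*(3*δ*t) ≤ n*(3*δ*t) := Nat.mul_le_mul_right _ (by omega)
    have e2 : n*(3*δ*t) + 3*n*δ = 3*n*δ*(t+1) := by ring
    have e3 : 3*n*δ*(t+1) ≤ 3*n*δ*M := Nat.mul_le_mul_left _ (by omega)
    omega
  have hmain := RMIaux.schema n p hp0 hp1 (degSet n D) (Finset.range M)
    (fun t i => boxS n D δ (3*δ*t) i₀ i) (fun t => boxZ n D δ (3*δ*t) i₀)
    (fun t _ => regionR_subset i₀)
    (fun t ht t' ht' hne => by
      rcases Nat.lt_or_ge t t' with h | h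
      · refine regionR_disjoint i₀ hn ?_
        have : 3*δ*t + 3*δ = 3*δ*(t+1) := by ring
        rw [this]
        exact Nat.mul_le_mul_left _ (by omega)
      · have hlt : t' < t := by omega
        refine (regionR_disjoint i₀ hn ?_).symm
        have : 3*δ*t' + 3*δ = 3*δ*(t'+1) := by ring
        rw [this]
        exact Nat.mul_le_mul_left _ (by omega))
    (fun t _ => boxZ_disjoint_biUnion i₀)
    (fun t _ i j hij => boxS_disjoint i₀ hij)
    {G | ∃ L, IsWitnessSet n G L}
    (fun G hG t ht hocc hZ =>
      Set.mem_setOf.2 (sparse_witness i₀ hn hδ (hC1 t (Finset.mem_range.1 ht)) G hG hocc hZ))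
  have hgrm : grmPr n D p {G | ∃ L, IsWitnessSet n G L}
      = RMIaux.Wgt p (degSet n D) (Set.indicator {G | ∃ L, IsWitnessSet n G L} fun _ => 1) := rfl
  rw [hgrm]
  refine le_trans ?_ hmain
  have hfactor : ∀ t ∈ Finset.range M,
      1 - (1-p)^((boxZ n D δ (3*δ*t) i₀).card)
        * ∏ i : Fin n, (1 - (1-p)^((boxS n D δ (3*δ*t) i₀ i).card)) ≤ 1 - βs := by
    intro t ht
    have hC := hC1 t (Finset.mem_range.1 ht)
    have hz : (1-p)^((4*n*δ)^(n-1)) ≤ (1-p)^((boxZ n D δ (3*δ*t) i₀).card) :=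
      pow_le_pow_of_le_one hq0 hq1 (card_boxZ_le i₀ hδ hn)
    have hsi : ∀ i : Fin n, (1 - (1-p)^(δ^(n-1)))
        ≤ (1 - (1-p)^((boxS n D δ (3*δ*t) i₀ i).card)) := by
      intro i
      have hcard : δ^(n-1) ≤ (boxS n D δ (3*δ*t) i₀ i).card := by
        rw [boxS]
        split
        · exact card_boxA_ge i₀ hC hδ
        · exact card_boxB_ge i₀ i (by assumption) hC hδ
      have := pow_le_pow_of_le_one hq0 hq1 hcard
      linarith
    have hprod : (1 - (1-p)^(δ^(n-1)))^n
        ≤ ∏ i : Fin n, (1 - (1-p)^((boxS n D δ (3*δ*t) i₀ i).card)) := by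
      have h := Finset.prod_le_prod (s := Finset.univ)
        (f := fun _ : Fin n => (1 - (1-p)^(δ^(n-1))))
        (g := fun i : Fin n => 1 - (1-p)^((boxS n D δ (3*δ*t) i₀ i).card))
        (fun i _ => by
          show (0:ℝ) ≤ 1 - (1-p)^(δ^(n-1))
          have := hqpow1 (δ^(n-1)); linarith)
        (fun i _ => hsi i)
      rwa [Finset.prod_const, Finset.card_univ, Fintype.card_fin] at h
    have hocc0 : (0:ℝ) ≤ (1 - (1-p)^(δ^(n-1)))^n :=
      pow_nonneg (by have := hqpow1 (δ^(n-1)); linarith) n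
    have hβt : βs ≤ (1-p)^((boxZ n D δ (3*δ*t) i₀).card)
        * ∏ i : Fin n, (1 - (1-p)^((boxS n D δ (3*δ*t) i₀ i).card)) := by
      refine mul_le_mul hz hprod hocc0 (hqpow0 _)
    linarith
  have hnonneg : ∀ t ∈ Finset.range M,
      0 ≤ 1 - (1-p)^((boxZ n D δ (3*δ*t) i₀).card)
        * ∏ i : Fin n, (1 - (1-p)^((boxS n D δ (3*δ*t) i₀ i).card)) := by
    intro t ht
    have h1 : (1-p)^((boxZ n D δ (3*δ*t) i₀).card) ≤ 1 := hqpow1 _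
    have h2 : ∏ i : Fin n, (1 - (1-p)^((boxS n D δ (3*δ*t) i₀ i).card)) ≤ 1 := by
      refine prod_le_pow_card' Finset.univ _ 1 ?_ ?_ |>.trans (by rw [one_pow])
      · intro i _; have := hqpow1 ((boxS n D δ (3*δ*t) i₀ i).card); linarith
      · intro i _; have := hqpow0 ((boxS n D δ (3*δ*t) i₀ i).card); linarith
    have h3 : 0 ≤ ∏ i : Fin n, (1 - (1-p)^((boxS n D δ (3*δ*t) i₀ i).card)) := by
      refine Finset.prod_nonneg (fun i _ => ?_)
      have := hqpow1 ((boxS n D δ (3*δ*t) i₀ i).card); linarith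
    nlinarith
  have hfin : ∏ t ∈ Finset.range M,
      (1 - (1-p)^((boxZ n D δ (3*δ*t) i₀).card)
        * ∏ i : Fin n, (1 - (1-p)^((boxS n D δ (3*δ*t) i₀ i).card))) ≤ (1 - βs)^M := by
    have := prod_le_pow_card' (Finset.range M) _ (1 - βs) hnonneg hfactor
    rwa [Finset.card_range] at this
  linarith

/-- The dense-regime master bound. -/
theorem dense_master {n D M : ℕ} (i₀ : Fin n) (p : ℝ)
    (hn : 2 ≤ n) (hp0 : 0 ≤ p) (hp1 : p ≤ 1) (hM : 2*n*M ≤ D) :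
    1 - (1 - p^n)^M ≤ grmPr n D p {G | ∃ L, IsWitnessSet n G L} := by
  classical
  have hC1 : ∀ t, t < M → (n-1)*(2*t) + 1 ≤ D := by
    intro t ht
    have e1 : (n-1)*(2*t) ≤ n*(2*t) := Nat.mul_le_mul_right _ (by omega)
    have e2 : n*(2*t) + 2*n = 2*n*(t+1) := by ring
    have e3 : 2*n*(t+1) ≤ 2*n*M := Nat.mul_le_mul_left _ (by omega)
    omega
  have hmain := RMIaux.schema n p hp0 hp1 (degSet n D) (Finset.range M)
    (fun t i => denseS n D (2*t) i₀ i) (fun _ => (∅ : Finset (Fin n → ℕ)))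
    (fun t ht => denseR_subset i₀ (by omega) (hC1 t (Finset.mem_range.1 ht)))
    (fun t ht t' ht' hne => by
      rcases Nat.lt_or_ge t t' with h | h
      · exact denseR_disjoint i₀ hn (by omega)
      · exact (denseR_disjoint i₀ hn (by omega)).symm)
    (fun t _ => Finset.disjoint_left.2 (fun α hα => absurd hα (Finset.notMem_empty α)))
    (fun t _ i j hij => denseS_disjoint i₀ hij)
    {G | ∃ L, IsWitnessSet n G L}
    (fun G hG t ht hocc hZ => by
      refine Set.mem_setOf.2 (dense_witness i₀ hn (hC1 t (Finset.mem_range.1 ht)) G hG ?_)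
      intro i
      obtain ⟨x, hx⟩ := hocc i
      obtain ⟨hxG, hxS⟩ := Finset.mem_inter.1 hx
      have hxe : x = patP n D (2*t) i₀ i := Finset.mem_singleton.1 hxS
      rwa [← hxe])
  have hgrm : grmPr n D p {G | ∃ L, IsWitnessSet n G L}
      = RMIaux.Wgt p (degSet n D) (Set.indicator {G | ∃ L, IsWitnessSet n G L} fun _ => 1) := rfl
  rw [hgrm]
  refine le_trans (le_of_eq ?_) hmain
  congr 1
  symm
  have hterm : ∀ t ∈ Finset.range M,
      (1 - (1-p)^(((∅ : Finset (Fin n → ℕ))).card)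
        * ∏ i : Fin n, (1 - (1-p)^((denseS n D (2*t) i₀ i).card))) = 1 - p^n := by
    intro t _
    have hZcard : ((∅ : Finset (Fin n → ℕ))).card = 0 := Finset.card_empty
    have hScard : ∀ i : Fin n, (denseS n D (2*t) i₀ i).card = 1 := fun i =>
      Finset.card_singleton _
    rw [hZcard, pow_zero, one_mul]
    have he : ∀ i : Fin n, (1 - (1-p)^((denseS n D (2*t) i₀ i).card)) = p := by
      intro i
      rw [hScard i, pow_one]
      ring
    rw [Finset.prod_congr rfl (fun i _ => he i), Finset.prod_const, Finset.card_univ,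
      Fintype.card_fin]
  rw [Finset.prod_congr rfl hterm, Finset.prod_const, Finset.card_range]

end RMI


namespace RMI

theorem grmPr_le_one (n D : ℕ) (p : ℝ) (hp0 : 0 ≤ p) (hp1 : p ≤ 1)
    (E : Set (Finset (Fin n → ℕ))) : grmPr n D p E ≤ 1 := by
  have h : grmPr n D p E
      = RMIaux.Wgt p (degSet n D) (Set.indicator E fun _ => 1) := rfl
  rw [h]
  calc RMIaux.Wgt p (degSet n D) (Set.indicator E fun _ => 1)
      ≤ RMIaux.Wgt p (degSet n D) (fun _ => 1) := by
        refine RMIaux.Wgt_mono p hp0 hp1 (fun G _ => ?_)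
        by_cases hG : G ∈ E
        · rw [Set.indicator_of_mem hG]
        · rw [Set.indicator_of_notMem hG]; norm_num
    _ = 1 := RMIaux.Wgt_one p (degSet n D)

end RMI

theorem aas_witness_set_above_threshold
    (n : ℕ) (hn : 2 ≤ n) (p : ℕ → ℝ) (hp : ∀ D, p D ∈ Set.Icc (0:ℝ) 1)
    (hpinf : Tendsto (fun D : ℕ => (D : ℝ) ^ (n - 1) * p D) atTop atTop) :
    Tendsto (fun D : ℕ => grmPr n D (p D) {G | ∃ L, IsWitnessSet n G L})
      atTop (nhds 1) := by
  classical
  have hn0 : 0 < n := by omega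
  set i₀ : Fin n := ⟨0, hn0⟩ with hi₀
  rw [Metric.tendsto_atTop]
  intro ε hε
  -- constants
  have hn1 : (1:ℝ) ≤ (n:ℝ) := by exact_mod_cast hn0
  have hA8 : (0:ℝ) < (8*(n:ℝ))^(n-1) := by positivity
  have hA8' : (1:ℝ) ≤ (8*(n:ℝ))^(n-1) := one_le_pow₀ (by linarith)
  have hA4 : (0:ℝ) < (4*(n:ℝ))^(n-1) := by positivity
  have hA4' : (1:ℝ) ≤ (4*(n:ℝ))^(n-1) := one_le_pow₀ (by linarith)
  set εn : ℝ := 1/(2*(8*(n:ℝ))^(n-1)) with hεn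
  have hεn0 : 0 < εn := by rw [hεn]; positivity
  have hεn1 : εn ≤ 1 := by
    rw [hεn, div_le_one (by positivity)]
    nlinarith
  set βspar : ℝ := (1/2) * (εn/2)^n with hβspar
  have hβspar0 : 0 < βspar := by rw [hβspar]; positivity
  have hβspar1 : βspar ≤ 1 := by
    rw [hβspar]
    have h1 : εn/2 ≤ 1 := by linarith
    have h2 : (εn/2)^n ≤ 1 := pow_le_one₀ (by positivity) h1
    nlinarith
  set p₀ : ℝ := 1/(2*(4*(n:ℝ))^(n-1)) with hp₀
  have hp₀0 : 0 < p₀ := by rw [hp₀]; positivity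
  have hp₀1 : p₀ ≤ 1 := by
    rw [hp₀, div_le_one (by positivity)]
    nlinarith
  set βden : ℝ := p₀^n with hβden
  have hβden0 : 0 < βden := by rw [hβden]; positivity
  have hβden1 : βden ≤ 1 := pow_le_one₀ (le_of_lt hp₀0) hp₀1
  set β : ℝ := min βspar βden with hβ
  have hβ0 : 0 < β := lt_min hβspar0 hβden0
  have hβ1 : β ≤ 1 := le_trans (min_le_left _ _) hβspar1
  -- choose K with (1-β)^K < ε
  obtain ⟨K, hK⟩ : ∃ K : ℕ, (1-β)^K < ε := by
    have habs : |1 - β| < 1 := abs_lt.2 ⟨by linarith, by linarith⟩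
    have h := tendsto_pow_atTop_nhds_zero_of_abs_lt_one habs
    exact (h.eventually (gt_mem_nhds hε)).exists
  -- eventual conditions
  set C : ℝ := ((K:ℝ))^(n-1) + 1 with hC
  have hC1 : (1:ℝ) ≤ C := by
    rw [hC]
    nlinarith [pow_nonneg (Nat.cast_nonneg K : (0:ℝ) ≤ (K:ℝ)) (n-1)]
  obtain ⟨N₁, hN₁⟩ := Filter.eventually_atTop.1 (hpinf.eventually_ge_atTop C)
  refine ⟨max N₁ (2*n*K + 2*n + 1), fun D hD => ?_⟩
  have hDN₁ : N₁ ≤ D := le_trans (le_max_left _ _) hD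
  have hD2 : 2*n*K + 2*n + 1 ≤ D := le_trans (le_max_right _ _) hD
  have hD1 : 1 ≤ D := by omega
  have hCD : C ≤ (D:ℝ)^(n-1) * p D := hN₁ D hDN₁
  have hp0 : 0 ≤ p D := (hp D).1
  have hp1 : p D ≤ 1 := (hp D).2
  -- key bound
  have key : 1 - (1-β)^K ≤ grmPr n D (p D) {G | ∃ L, IsWitnessSet n G L} := by
    by_cases hcase : (((4*n)^(n-1) : ℕ) : ℝ) * p D ≤ 1/2
    · -- SPARSE case
      set P : ℕ → Prop := fun d => (((4*n*d)^(n-1) : ℕ) : ℝ) * p D ≤ 1/2 with hP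
      have hP1 : P 1 := by
        show (((4*n*1)^(n-1) : ℕ) : ℝ) * p D ≤ 1/2
        simpa using hcase
      set δ : ℕ := Nat.findGreatest P D with hδdef
      have hδ1 : 1 ≤ δ := Nat.le_findGreatest hD1 hP1
      have hPδ : P δ := Nat.findGreatest_spec hD1 hP1
      have hδD : δ ≤ D := Nat.findGreatest_le D
      -- δ < D
      have hδltD : δ < D := by
        rcases Nat.lt_or_ge δ D with h | h
        · exact h
        · exfalso
          have hδeq : δ = D := le_antisymm hδD h
          have hPD0 : P D := by rw [← hδeq]; exact hPδ
          have hPD : (((4*n*D)^(n-1) : ℕ) : ℝ) * p D ≤ 1/2 := hPD0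
          have hmono : ((D:ℝ))^(n-1) ≤ (((4*n*D)^(n-1) : ℕ) : ℝ) := by
            push_cast
            refine pow_le_pow_left₀ (Nat.cast_nonneg D) ?_ _
            nlinarith [(Nat.cast_nonneg D : (0:ℝ) ≤ (D:ℝ))]
          have : ((D:ℝ))^(n-1) * p D ≤ 1/2 := by
            calc ((D:ℝ))^(n-1) * p D ≤ (((4*n*D)^(n-1) : ℕ) : ℝ) * p D :=
                  mul_le_mul_of_nonneg_right hmono hp0
              _ ≤ 1/2 := hPD
          linarith
      have hnotP : ¬ P (δ+1) :=
        Nat.findGreatest_is_greatest (by rw [← hδdef]; omega) (by omega)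
      -- occupancy: εn ≤ δ^(n-1) * p
      have hocc : εn ≤ ((δ^(n-1) : ℕ) : ℝ) * p D := by
        have hnotP' : ¬ ((((4*n*(δ+1))^(n-1) : ℕ) : ℝ) * p D ≤ 1/2) := hnotP
        push_neg at hnotP'
        have hbase : 4*n*(δ+1) ≤ 8*n*δ := by
          have e1 : 4*n*(δ+1) = 4*n*δ + 4*n := by ring
          have e2 : 8*n*δ = 4*n*δ + 4*n*δ := by ring
          have e3 : 4*n*1 ≤ 4*n*δ := Nat.mul_le_mul_left _ hδ1
          omega
        have hmono : ((4*n*(δ+1))^(n-1) : ℕ) ≤ ((8*n*δ)^(n-1) : ℕ) :=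
          Nat.pow_le_pow_left hbase _
        have h8 : (1:ℝ)/2 < (((8*n*δ)^(n-1) : ℕ) : ℝ) * p D := by
          refine lt_of_lt_of_le hnotP' (mul_le_mul_of_nonneg_right ?_ hp0)
          exact_mod_cast hmono
        have hsplit : (((8*n*δ)^(n-1) : ℕ) : ℝ) = (8*(n:ℝ))^(n-1) * ((δ^(n-1) : ℕ) : ℝ) := by
          push_cast
          rw [← mul_pow]
        rw [hsplit] at h8
        rw [hεn]
        rw [div_le_iff₀ (by positivity)]
        have hx0 : (0:ℝ) ≤ ((δ^(n-1) : ℕ) : ℝ) * p D := by positivity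
        nlinarith
      -- M
      set M : ℕ := D / (3*n*δ) with hMdef
      have h3nδ : 0 < 3*n*δ := by positivity
      have hM : 3*n*δ*M ≤ D := by
        rw [hMdef, mul_comm]
        exact Nat.div_mul_le_self D (3*n*δ)
      have hMK : K ≤ M := by
        rw [hMdef, Nat.le_div_iff_mul_le h3nδ]
        by_contra hcon
        push_neg at hcon
        have hDlt : (D:ℝ) < (K:ℝ) * (3*n*δ : ℕ) := by exact_mod_cast hcon
        have hstep : (D:ℝ)^(n-1) ≤ ((K:ℝ) * ((4*n*δ : ℕ):ℝ))^(n-1) := by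
          refine pow_le_pow_left₀ (by positivity) ?_ _
          refine le_trans (le_of_lt hDlt) ?_
          have : ((3*n*δ : ℕ):ℝ) ≤ ((4*n*δ : ℕ):ℝ) := by
            exact_mod_cast Nat.mul_le_mul_right δ (by omega)
          nlinarith [Nat.cast_nonneg (α := ℝ) K]
        have hPδ' : (((4*n*δ)^(n-1) : ℕ) : ℝ) * p D ≤ 1/2 := hPδ
        have hc4 : (((4*n*δ)^(n-1) : ℕ) : ℝ) = (((4*n*δ : ℕ)):ℝ)^(n-1) := by push_cast; ring
        have : (D:ℝ)^(n-1) * p D ≤ (K:ℝ)^(n-1) * (1/2) := by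
          calc (D:ℝ)^(n-1) * p D ≤ ((K:ℝ) * ((4*n*δ : ℕ):ℝ))^(n-1) * p D :=
                mul_le_mul_of_nonneg_right hstep hp0
            _ = (K:ℝ)^(n-1) * ((((4*n*δ : ℕ)):ℝ)^(n-1) * p D) := by rw [mul_pow]; ring
            _ ≤ (K:ℝ)^(n-1) * (1/2) := by
                refine mul_le_mul_of_nonneg_left ?_ (by positivity)
                rw [← hc4]
                exact hPδ'
        have hCle : C ≤ (K:ℝ)^(n-1) * (1/2) := le_trans hCD this
        rw [hC] at hCle
        nlinarith [pow_nonneg (Nat.cast_nonneg (α := ℝ) K) (n-1)]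
      -- apply master
      have hmaster := RMI.sparse_master (D := D) (δ := δ) (M := M) i₀ (p D) hn hp0 hp1 hδ1 hM
      -- numeric lower bound on βs
      set q : ℝ := 1 - p D with hq
      have hf1 : (1:ℝ)/2 ≤ q^((4*n*δ)^(n-1)) := by
        have h1 := RMI.pow_one_sub_ge (p D) hp0 hp1 ((4*n*δ)^(n-1))
        have hPδ'' : (((4*n*δ)^(n-1) : ℕ) : ℝ) * p D ≤ 1/2 := hPδ
        rw [hq]
        linarith
      have hf2 : εn/2 ≤ 1 - q^(δ^(n-1)) := by
        rw [hq]
        exact RMI.occupancy_ge (p D) hp0 hp1 (δ^(n-1)) εn (le_of_lt hεn0) hεn1 hocc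
      have hq0 : 0 ≤ q := by rw [hq]; linarith
      have hq1 : q ≤ 1 := by rw [hq]; linarith
      have hf2' : (εn/2)^n ≤ (1 - q^(δ^(n-1)))^n :=
        pow_le_pow_left₀ (by positivity) hf2 n
      have hβsD : βspar ≤ q^((4*n*δ)^(n-1)) * (1 - q^(δ^(n-1)))^n := by
        rw [hβspar]
        refine mul_le_mul hf1 hf2' (by positivity) ?_
        exact pow_nonneg hq0 _
      have hβsD1 : q^((4*n*δ)^(n-1)) * (1 - q^(δ^(n-1)))^n ≤ 1 := by
        have h1 : q^((4*n*δ)^(n-1)) ≤ 1 := pow_le_one₀ hq0 hq1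
        have h2 : (1 - q^(δ^(n-1)))^n ≤ 1 :=
          pow_le_one₀ (by have := pow_le_one₀ hq0 hq1 (n := δ^(n-1)); linarith)
            (by have := pow_nonneg hq0 (δ^(n-1)); linarith)
        have h0 : 0 ≤ (1 - q^(δ^(n-1)))^n :=
          pow_nonneg (by have := pow_le_one₀ hq0 hq1 (n := δ^(n-1)); linarith) n
        exact mul_le_one₀ h1 h0 h2
      have hβle : β ≤ q^((4*n*δ)^(n-1)) * (1 - q^(δ^(n-1)))^n :=
        le_trans (min_le_left _ _) hβsD
      have hchain : (1 - q^((4*n*δ)^(n-1)) * (1 - q^(δ^(n-1)))^n)^M ≤ (1-β)^K := by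
        calc (1 - q^((4*n*δ)^(n-1)) * (1 - q^(δ^(n-1)))^n)^M ≤ (1-β)^M := by
              refine pow_le_pow_left₀ (by linarith) (by linarith) M
          _ ≤ (1-β)^K := pow_le_pow_of_le_one (by linarith) (by linarith) hMK
      rw [hq] at hchain
      linarith [hmaster, hchain]
    · -- DENSE case
      push_neg at hcase
      have hpp₀ : p₀ ≤ p D := by
        rw [hp₀]
        rw [div_le_iff₀ (by positivity)]
        have hcast : (((4*n)^(n-1) : ℕ) : ℝ) = (4*(n:ℝ))^(n-1) := by push_cast; ring
        rw [hcast] at hcase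
        nlinarith
      set M : ℕ := D / (2*n) with hMdef
      have h2n : 0 < 2*n := by omega
      have hM : 2*n*M ≤ D := by
        rw [hMdef, mul_comm]
        exact Nat.div_mul_le_self D (2*n)
      have hMK : K ≤ M := by
        rw [hMdef, Nat.le_div_iff_mul_le h2n]
        have e : K*(2*n) = 2*n*K := by ring
        omega
      have hmaster := RMI.dense_master (D := D) (M := M) i₀ (p D) hn hp0 hp1 hM
      have hβle : β ≤ (p D)^n :=
        le_trans (min_le_right _ _) (by rw [hβden]; exact pow_le_pow_left₀ (le_of_lt hp₀0) hpp₀ n)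
      have hpn1 : (p D)^n ≤ 1 := pow_le_one₀ hp0 hp1
      have hchain : (1 - (p D)^n)^M ≤ (1-β)^K := by
        calc (1 - (p D)^n)^M ≤ (1-β)^M :=
              pow_le_pow_left₀ (by linarith) (by linarith) M
          _ ≤ (1-β)^K := pow_le_pow_of_le_one (by linarith) (by linarith) hMK
      linarith [hmaster, hchain]
  -- conclude
  have hle1 := RMI.grmPr_le_one n D (p D) hp0 hp1 {G | ∃ L, IsWitnessSet n G L}
  have hpow0 : 0 ≤ (1-β)^K := pow_nonneg (by linarith) K
  rw [Real.dist_eq, abs_of_nonpos (by linarith)]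
  linarith
end

section
/- Let n ≥ 2 and let p : ℕ → [0,1] satisfy D^{n−3/2}·p(D) → 0 as D → ∞. Then for the random set G of the graded model M(n,D,p), the probability that G is strongly generic tends to 1 as D → ∞. -/
open Finset Filter

/-- A set of exponent vectors is strongly generic if no variable appears with the same
nonzero exponent in two distinct elements. -/
def StronglyGeneric {n : ℕ} (G : Finset (Fin n → ℕ)) : Prop :=
  ∀ α ∈ G, ∀ β ∈ G, α ≠ β → ∀ i, α i = β i → α i = 0


lemma total_mass {X : Type*} [DecidableEq X] (Ω : Finset X) (p : ℝ) :
    ∑ G ∈ Ω.powerset, p ^ G.card * (1 - p) ^ (Ω.card - G.card) = 1 := by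
  have h1 : (1:ℝ) = ∑ t ∈ Ω.powerset, (∏ _i ∈ t, p) * ∏ _i ∈ Ω \ t, (1 - p) := by
    rw [← Finset.prod_add]; simp
  conv_rhs => rw [h1]
  refine Finset.sum_congr rfl fun t ht => ?_
  rw [Finset.prod_const, Finset.prod_const, Finset.card_sdiff_of_subset (Finset.mem_powerset.mp ht)]

lemma subset_mass {X : Type*} [DecidableEq X] (Ω S : Finset X) (hS : S ⊆ Ω) (p : ℝ) :
    ∑ G ∈ Ω.powerset, (if S ⊆ G then (1:ℝ) else 0) * (p ^ G.card * (1 - p) ^ (Ω.card - G.card))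
      = p ^ S.card := by
  have key : ∑ G ∈ Ω.powerset.filter (fun G => S ⊆ G), p ^ G.card * (1-p) ^ (Ω.card - G.card)
      = ∑ H ∈ (Ω \ S).powerset, p ^ (S.card + H.card) * (1-p) ^ ((Ω \ S).card - H.card) := by
    refine Finset.sum_bij' (fun G _ => G \ S) (fun H _ => H ∪ S) ?_ ?_ ?_ ?_ ?_
    · intro G hG
      rw [Finset.mem_filter, Finset.mem_powerset] at hG
      exact Finset.mem_powerset.mpr (Finset.sdiff_subset_sdiff hG.1 le_rfl)
    · intro H hH
      rw [Finset.mem_powerset] at hH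
      rw [Finset.mem_filter, Finset.mem_powerset]
      exact ⟨Finset.union_subset (hH.trans Finset.sdiff_subset) hS, Finset.subset_union_right⟩
    · intro G hG
      rw [Finset.mem_filter] at hG
      exact Finset.sdiff_union_of_subset hG.2
    · intro H hH
      rw [Finset.mem_powerset] at hH
      have hd : Disjoint H S := Finset.disjoint_of_subset_left hH Finset.sdiff_disjoint
      exact Finset.union_sdiff_cancel_right hd
    · intro G hG
      rw [Finset.mem_filter, Finset.mem_powerset] at hG
      have h1 : (G \ S).card = G.card - S.card := Finset.card_sdiff_of_subset hG.2
      have h2 : (Ω \ S).card = Ω.card - S.card := Finset.card_sdiff_of_subset hS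
      have hc1 : S.card ≤ G.card := Finset.card_le_card hG.2
      have hc2 : G.card ≤ Ω.card := Finset.card_le_card hG.1
      rw [h1, h2]
      congr 1
      · congr 1; omega
      · congr 1; omega
  simp only [boole_mul] at *
  rw [← Finset.sum_filter]
  · rw [key]
    have : ∀ H ∈ (Ω \ S).powerset, p ^ (S.card + H.card) * (1-p) ^ ((Ω \ S).card - H.card)
        = p ^ S.card * (p ^ H.card * (1-p) ^ ((Ω \ S).card - H.card)) := by
      intro H _; rw [pow_add]; ring
    rw [Finset.sum_congr rfl this, ← Finset.mul_sum, total_mass (Ω \ S) p, mul_one]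


lemma coord_le {n D : ℕ} {β : Fin n → ℕ} (hβ : β ∈ degSet n D) (k : Fin n) : β k ≤ D := by
  rw [degSet, Finset.Nat.mem_antidiagonalTuple] at hβ
  rw [← hβ]
  exact Finset.single_le_sum (fun _ _ => Nat.zero_le _) (Finset.mem_univ k)

lemma card_le_of_zeroed {n D : ℕ} (s : Finset (Fin n)) (Φ : Finset (Fin n → ℕ))
    (F : (Fin n → ℕ) → (Fin n → ℕ))
    (hmem : ∀ β ∈ Φ, ∀ k, F β k ∈ (if k ∈ s then ({0} : Finset ℕ) else Finset.range (D+1)))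
    (hinj : Set.InjOn F ↑Φ) : Φ.card ≤ (D + 1) ^ (n - s.card) := by
  have h1 : Φ.card ≤ (Fintype.piFinset
      (fun k => if k ∈ s then ({0} : Finset ℕ) else Finset.range (D+1))).card :=
    Finset.card_le_card_of_injOn F (fun β hβ => Fintype.mem_piFinset.mpr (hmem β hβ)) hinj
  refine h1.trans_eq ?_
  rw [Fintype.card_piFinset]
  have h2 : ∀ k : Fin n, (if k ∈ s then ({0}:Finset ℕ) else Finset.range (D+1)).card
      = if k ∈ s then 1 else (D+1) := by intro k; split <;> simp
  rw [Finset.prod_congr rfl (fun k _ => h2 k), Finset.prod_ite]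
  have h3 : Finset.filter (fun k => k ∈ s) Finset.univ = s := by ext k; simp
  have h4 : Finset.filter (fun k => ¬ k ∈ s) Finset.univ = Finset.univ \ s := by ext k; simp
  rw [h3, h4, Finset.prod_const, Finset.prod_const, Finset.card_sdiff_of_subset (Finset.subset_univ s)]
  simp

lemma card_degSet_le (n D : ℕ) (hn : 1 ≤ n) : (degSet n D).card ≤ (D+1)^(n-1) := by
  have hj : 0 < n := hn
  set j : Fin n := ⟨0, hj⟩ with hjdef
  have h := card_le_of_zeroed (D := D) {j} (degSet n D) (fun β => Function.update β j 0) ?_ ?_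
  · simpa using h
  · intro β hβ k
    by_cases hk : k = j
    · subst hk; simp
    · show Function.update β j 0 k ∈ _
      rw [Function.update_of_ne hk, if_neg (by simpa using hk), Finset.mem_range]
      exact Nat.lt_succ_of_le (coord_le hβ k)
  · intro β hβ β' hβ' hF
    simp only [Finset.coe_mem, Finset.mem_coe] at hβ hβ'
    rw [degSet, Finset.Nat.mem_antidiagonalTuple] at hβ hβ'
    funext k
    by_cases hk : k = j
    · subst hk
      have e1 : β j + ∑ x ∈ Finset.univ.erase j, β x = D := by
        rw [Finset.add_sum_erase _ _ (Finset.mem_univ j)]; exact hβ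
      have e2 : β' j + ∑ x ∈ Finset.univ.erase j, β' x = D := by
        rw [Finset.add_sum_erase _ _ (Finset.mem_univ j)]; exact hβ'
      have e3 : ∑ x ∈ Finset.univ.erase j, β x = ∑ x ∈ Finset.univ.erase j, β' x := by
        refine Finset.sum_congr rfl fun x hx => ?_
        have hxj : x ≠ j := Finset.ne_of_mem_erase hx
        have := congrFun hF x
        simp only [] at this
        rwa [Function.update_of_ne hxj, Function.update_of_ne hxj] at this
      omega
    · have := congrFun hF k
      simp only [] at this
      rwa [Function.update_of_ne hk, Function.update_of_ne hk] at this

lemma card_coordFiber_le (n D : ℕ) (hn : 2 ≤ n) (i : Fin n) (a : ℕ) :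
    ((degSet n D).filter (fun β => β i = a)).card ≤ (D+1)^(n-2) := by
  have h2 : 1 < n := hn
  set j : Fin n := if i.val = 0 then ⟨1, h2⟩ else ⟨0, by omega⟩ with hjdef
  have hij : i ≠ j := by
    rw [hjdef]
    split
    · next h => intro hc; rw [Fin.ext_iff] at hc; simp at hc; omega
    · next h => intro hc; rw [Fin.ext_iff] at hc; simp at hc; omega
  have hscard : ({i, j} : Finset (Fin n)).card = 2 := Finset.card_pair hij
  have h := card_le_of_zeroed (D := D) {i, j} ((degSet n D).filter (fun β => β i = a))
      (fun β => Function.update (Function.update β i 0) j 0) ?_ ?_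
  · rwa [hscard] at h
  · intro β hβ k
    rw [Finset.mem_filter] at hβ
    by_cases hk : k ∈ ({i, j} : Finset (Fin n))
    · rw [if_pos hk, Finset.mem_singleton]
      show Function.update (Function.update β i 0) j 0 k = 0
      rcases Finset.mem_insert.mp hk with h | h
      · subst h
        rw [Function.update_of_ne hij, Function.update_self]
      · rw [Finset.mem_singleton] at h; subst h
        rw [Function.update_self]
    · rw [if_neg hk, Finset.mem_range]
      rw [Finset.mem_insert, Finset.mem_singleton] at hk
      push_neg at hk
      show Function.update (Function.update β i 0) j 0 k < D + 1
      rw [Function.update_of_ne hk.2, Function.update_of_ne hk.1]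
      exact Nat.lt_succ_of_le (coord_le hβ.1 k)
  · intro β hβ β' hβ' hF
    rw [Finset.mem_coe, Finset.mem_filter] at hβ hβ'
    obtain ⟨hβd, hβa⟩ := hβ
    obtain ⟨hβd', hβa'⟩ := hβ'
    rw [degSet, Finset.Nat.mem_antidiagonalTuple] at hβd hβd'
    simp only [] at hF
    have hrest : ∀ k : Fin n, k ≠ i → k ≠ j → β k = β' k := by
      intro k hki hkj
      have := congrFun hF k
      rwa [Function.update_of_ne hkj, Function.update_of_ne hki,
        Function.update_of_ne hkj, Function.update_of_ne hki] at this
    have hjm : j ∈ Finset.univ.erase i := Finset.mem_erase.mpr ⟨(Ne.symm hij), Finset.mem_univ j⟩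
    have e1 : β i + (β j + ∑ x ∈ (Finset.univ.erase i).erase j, β x) = D := by
      rw [Finset.add_sum_erase _ _ hjm, Finset.add_sum_erase _ _ (Finset.mem_univ i)]
      exact hβd
    have e2 : β' i + (β' j + ∑ x ∈ (Finset.univ.erase i).erase j, β' x) = D := by
      rw [Finset.add_sum_erase _ _ hjm, Finset.add_sum_erase _ _ (Finset.mem_univ i)]
      exact hβd'
    have e3 : ∑ x ∈ (Finset.univ.erase i).erase j, β x
        = ∑ x ∈ (Finset.univ.erase i).erase j, β' x := by
      refine Finset.sum_congr rfl fun x hx => ?_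
      rw [Finset.mem_erase, Finset.mem_erase] at hx
      exact hrest x hx.2.1 hx.1
    funext k
    by_cases hki : k = i
    · subst hki; rw [hβa, hβa']
    · by_cases hkj : k = j
      · subst hkj; omega
      · exact hrest k hki hkj



lemma grmPr_compl (n D : ℕ) (q : ℝ) :
    grmPr n D q {G | StronglyGeneric G} = 1 - grmPr n D q {G | ¬ StronglyGeneric G} := by
  classical
  rw [eq_sub_iff_add_eq]
  unfold grmPr
  rw [← Finset.sum_add_distrib]
  refine Eq.trans (Finset.sum_congr rfl fun G _ => ?_) (total_mass (degSet n D) q)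
  rw [Set.indicator_apply, Set.indicator_apply]
  simp only [Set.mem_setOf_eq]
  by_cases h : StronglyGeneric G <;> simp [h]

lemma grmPr_nonneg (n D : ℕ) (q : ℝ) (h0 : 0 ≤ q) (h1 : q ≤ 1)
    (E : Set (Finset (Fin n → ℕ))) : 0 ≤ grmPr n D q E := by
  refine Finset.sum_nonneg fun G _ => mul_nonneg ?_
    (mul_nonneg (pow_nonneg h0 _) (pow_nonneg (by linarith) _))
  exact Set.indicator_nonneg (fun _ _ => zero_le_one) G

set_option maxHeartbeats 1600000 in
lemma grmPr_bad_le (n D : ℕ) (hn : 2 ≤ n) (q : ℝ) (h0 : 0 ≤ q) (h1 : q ≤ 1) :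
    grmPr n D q {G | ¬ StronglyGeneric G} ≤ (n : ℝ) * ((D:ℝ)+1)^(2*n-3) * q^2 := by
  classical
  have he : (n-1) + (n-2) = 2*n-3 := by omega
  unfold grmPr
  set Ω := degSet n D with hΩ
  set w : Finset (Fin n → ℕ) → ℝ := fun G => q ^ G.card * (1-q) ^ (Ω.card - G.card) with hwdef
  have hw : ∀ G : Finset (Fin n → ℕ), 0 ≤ w G :=
    fun G => mul_nonneg (pow_nonneg h0 _) (pow_nonneg (by linarith) _)
  set T : Finset (Fin n × (Fin n → ℕ) × (Fin n → ℕ)) :=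
    (Finset.univ ×ˢ Ω ×ˢ Ω).filter (fun t => t.2.1 ≠ t.2.2 ∧ t.2.2 t.1 = t.2.1 t.1) with hT
  have hptw : ∀ G ∈ Ω.powerset,
      Set.indicator {G | ¬ StronglyGeneric G} (fun _ => (1:ℝ)) G
        ≤ ∑ t ∈ T, (if ({t.2.1, t.2.2} : Finset (Fin n → ℕ)) ⊆ G then (1:ℝ) else 0) := by
    intro G hG
    rw [Set.indicator_apply]
    split
    · next hGbad =>
      simp only [Set.mem_setOf_eq] at hGbad
      rw [StronglyGeneric] at hGbad; push_neg at hGbad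
      obtain ⟨α, hα, β, hβ, hab, i, hiv, hnz⟩ := hGbad
      have hGΩ : G ⊆ Ω := Finset.mem_powerset.mp hG
      have htm : (i, α, β) ∈ T := by
        rw [hT, Finset.mem_filter, Finset.mem_product, Finset.mem_product]
        exact ⟨⟨Finset.mem_univ i, hGΩ hα, hGΩ hβ⟩, hab, hiv.symm⟩
      have h1 : (if ({α, β} : Finset (Fin n → ℕ)) ⊆ G then (1:ℝ) else 0) = 1 :=
        if_pos (Finset.insert_subset hα (Finset.singleton_subset_iff.mpr hβ))
      calc (1:ℝ) = if ({α, β} : Finset (Fin n → ℕ)) ⊆ G then (1:ℝ) else 0 := h1.symm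
        _ ≤ _ := Finset.single_le_sum
            (f := fun t : Fin n × (Fin n → ℕ) × (Fin n → ℕ) =>
              if ({t.2.1, t.2.2} : Finset (Fin n → ℕ)) ⊆ G then (1:ℝ) else 0)
            (fun t _ => by split <;> norm_num) htm
    · next =>
      exact Finset.sum_nonneg fun t _ => by split <;> norm_num
  have hTcard : T.card ≤ n * (D+1)^(2*n-3) := by
    have hb1 : T.card ≤ ∑ i : Fin n, ∑ α ∈ Ω, ((Ω.filter (fun β => β i = α i)).card) := by
      rw [hT, Finset.card_filter, Finset.sum_product]
      refine Finset.sum_le_sum fun i _ => ?_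
      rw [Finset.sum_product]
      refine Finset.sum_le_sum fun α _ => ?_
      rw [Finset.card_filter]
      refine Finset.sum_le_sum fun β _ => ?_
      split
      · next h => rw [if_pos h.2]
      · exact Nat.zero_le _
    refine hb1.trans ?_
    have hb2 : ∀ i : Fin n, ∀ α ∈ Ω, ((Ω.filter (fun β => β i = α i)).card) ≤ (D+1)^(n-2) :=
      fun i α _ => card_coordFiber_le n D hn i (α i)
    have h3 : ∑ i : Fin n, ∑ α ∈ Ω, ((Ω.filter (fun β => β i = α i)).card)
        ≤ ∑ _i : Fin n, ∑ _α ∈ Ω, (D+1)^(n-2) :=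
      Finset.sum_le_sum fun i _ => Finset.sum_le_sum (hb2 i)
    have h4 : ∑ _i : Fin n, ∑ _α ∈ Ω, (D+1)^(n-2) = n * (Ω.card * (D+1)^(n-2)) := by
      rw [Finset.sum_const, Finset.sum_const, smul_eq_mul, smul_eq_mul,
        Finset.card_univ, Fintype.card_fin]
    have h6 : (D+1)^(n-1) * (D+1)^(n-2) = (D+1)^(2*n-3) := by
      rw [← pow_add]
      rw [he]
    have h7 : n * (Ω.card * (D+1)^(n-2)) ≤ n * (D+1)^(2*n-3) := by
      rw [← h6]
      have hcd : Ω.card ≤ (D+1)^(n-1) := card_degSet_le n D (Nat.one_le_of_lt hn)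
      exact Nat.mul_le_mul le_rfl (Nat.mul_le_mul hcd le_rfl)
    exact h3.trans (le_of_le_of_eq (le_of_eq h4) rfl |>.trans h7)
  calc ∑ G ∈ Ω.powerset, Set.indicator {G | ¬ StronglyGeneric G} (fun _ => (1:ℝ)) G * w G
      ≤ ∑ G ∈ Ω.powerset,
          (∑ t ∈ T, (if ({t.2.1, t.2.2} : Finset (Fin n → ℕ)) ⊆ G then (1:ℝ) else 0)) * w G :=
        Finset.sum_le_sum fun G hG => mul_le_mul_of_nonneg_right (hptw G hG) (hw G)
    _ = ∑ t ∈ T, ∑ G ∈ Ω.powerset,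
          (if ({t.2.1, t.2.2} : Finset (Fin n → ℕ)) ⊆ G then (1:ℝ) else 0) * w G := by
        simp_rw [Finset.sum_mul]
        exact Finset.sum_comm
    _ = ∑ t ∈ T, q ^ 2 := by
        refine Finset.sum_congr rfl fun t ht => ?_
        rw [hT, Finset.mem_filter, Finset.mem_product, Finset.mem_product] at ht
        have hsub : ({t.2.1, t.2.2} : Finset (Fin n → ℕ)) ⊆ Ω :=
          Finset.insert_subset ht.1.2.1 (Finset.singleton_subset_iff.mpr ht.1.2.2)
        have := subset_mass Ω {t.2.1, t.2.2} hsub q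
        rw [Finset.card_pair ht.2.1] at this
        exact this
    _ = (T.card : ℝ) * q ^ 2 := by rw [Finset.sum_const, nsmul_eq_mul]
    _ ≤ (n : ℝ) * ((D:ℝ)+1)^(2*n-3) * q^2 := by
        have : (T.card : ℝ) ≤ (n : ℝ) * ((D:ℝ)+1)^(2*n-3) := by
          exact_mod_cast Nat.cast_le.mpr hTcard |>.trans_eq (by push_cast; ring)
        exact mul_le_mul_of_nonneg_right this (sq_nonneg q)


theorem aas_strongly_generic_below_threshold
    (n : ℕ) (hn : 2 ≤ n) (p : ℕ → ℝ) (hp : ∀ D, p D ∈ Set.Icc (0:ℝ) 1)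
    (hp0 : Tendsto (fun D : ℕ => (D : ℝ) ^ ((n : ℝ) - 3 / 2) * p D) atTop (nhds 0)) :
    Tendsto (fun D : ℕ => grmPr n D (p D) {G | StronglyGeneric G}) atTop (nhds 1) := by
  have hB : Tendsto (fun D : ℕ => grmPr n D (p D) {G | ¬ StronglyGeneric G}) atTop (nhds 0) := by
    have hg : Tendsto
        (fun D : ℕ => ((n:ℝ) * 2^(2*n-3)) * ((D:ℝ)^((n:ℝ) - 3/2) * p D)^2) atTop (nhds 0) := by
      have h2 := hp0.mul hp0
      rw [mul_zero] at h2
      have h3 := h2.const_mul ((n:ℝ) * 2^(2*n-3))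
      rw [mul_zero] at h3
      exact h3.congr fun D => by ring
    refine squeeze_zero'
      (Filter.Eventually.of_forall fun D => grmPr_nonneg n D (p D) (hp D).1 (hp D).2 _) ?_ hg
    filter_upwards [eventually_ge_atTop 1] with D hD
    have hq := hp D
    refine (grmPr_bad_le n D hn (p D) hq.1 hq.2).trans ?_
    have hD1 : (1:ℝ) ≤ (D:ℝ) := by exact_mod_cast hD
    have hDpos : (0:ℝ) ≤ (D:ℝ) := by linarith
    have e1 : ((D:ℝ)+1)^(2*n-3) ≤ (2*(D:ℝ))^(2*n-3) :=
      pow_le_pow_left₀ (by linarith) (by linarith) _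
    have e2 : (2*(D:ℝ))^(2*n-3) = 2^(2*n-3) * (D:ℝ)^(2*n-3) := mul_pow _ _ _
    have e3 : ((D:ℝ))^(2*n-3) = ((D:ℝ)^((n:ℝ)-3/2))^2 := by
      rw [← Real.rpow_natCast (D:ℝ) (2*n-3)]
      have h3n : 3 ≤ 2*n := by omega
      have hcast : ((2*n-3 : ℕ) : ℝ) = ((n:ℝ)-3/2) * 2 := by
        rw [Nat.cast_sub h3n]
        push_cast
        ring
      rw [hcast, Real.rpow_mul hDpos]
      rw [show ((2:ℝ)) = ((2:ℕ):ℝ) by norm_num, Real.rpow_natCast]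
    calc (n:ℝ) * ((D:ℝ)+1)^(2*n-3) * (p D)^2
        ≤ (n:ℝ) * (2^(2*n-3) * ((D:ℝ)^((n:ℝ)-3/2))^2) * (p D)^2 := by
          have h4 := e1.trans_eq (e2.trans (by rw [e3]))
          exact mul_le_mul_of_nonneg_right
            (mul_le_mul_of_nonneg_left h4 (by positivity)) (sq_nonneg _)
      _ = ((n:ℝ) * 2^(2*n-3)) * ((D:ℝ)^((n:ℝ)-3/2) * p D)^2 := by ring
  have h1 : Tendsto (fun D : ℕ => 1 - grmPr n D (p D) {G | ¬ StronglyGeneric G})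
      atTop (nhds 1) := by
    have h2 := hB.const_sub 1
    simpa using h2
  exact h1.congr fun D => (grmPr_compl n D (p D)).symm
end

section
/- Let n ≥ 2, D ≥ 1, p ∈ [0,1], q = 1 − p, let a ≥ 1 be an integer, and let α ∈ ℕ^n satisfy α_1+⋯+α_n = D + a and α_i ≥ a for all i. Then for the random set G of the graded model M(n,D,p), the probability of the witness event w_α equals (1 − q^{m_{n−1}(a−n+1)})^n · q^{m_n(a−n)}. -/
open Finset Filter

/-- `m_n(d) = C(d+n-1, n-1)` for `d ≥ 0`, and `0` for `d < 0`. -/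
def mfun (n : ℕ) (d : ℤ) : ℕ := if 0 ≤ d then (d.toNat + n - 1).choose (n - 1) else 0

/-- The witness event `w_α`: for every `i` the random set `G` contains some `β` with
`β i = α i` and `β j < α j` for all `j ≠ i`, and `G` contains no `β` with `β j < α j`
for all `j`. -/
def wEvent {n : ℕ} (α : Fin n → ℕ) (G : Finset (Fin n → ℕ)) : Prop :=
  (∀ i, ∃ β ∈ G, β i = α i ∧ ∀ j, j ≠ i → β j < α j) ∧
    ¬ ∃ β ∈ G, ∀ j, β j < α j

section Aux

variable {X : Type*} [DecidableEq X]

lemma sum_powerset_pow (p q : ℝ) (A : Finset X) :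
    ∑ H ∈ A.powerset, p ^ H.card * q ^ (A.card - H.card) = (p + q) ^ A.card := by
  rw [← Finset.prod_const, Finset.prod_add]
  refine Finset.sum_congr rfl fun t ht => ?_
  rw [Finset.mem_powerset] at ht
  rw [Finset.prod_const, Finset.prod_const, Finset.card_sdiff_of_subset ht]

lemma split_lemma (p q : ℝ) (A B : Finset X) (hAB : Disjoint A B) (f g : Finset X → ℝ) :
    ∑ G ∈ (A ∪ B).powerset,
        f (G ∩ A) * g (G ∩ B) * (p ^ G.card * q ^ ((A ∪ B).card - G.card))
      = (∑ H ∈ A.powerset, f H * (p ^ H.card * q ^ (A.card - H.card))) *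
        (∑ K ∈ B.powerset, g K * (p ^ K.card * q ^ (B.card - K.card))) := by
  rw [Finset.sum_mul_sum, ← Finset.sum_product']
  refine Finset.sum_nbij' (fun G => (G ∩ A, G ∩ B)) (fun P => P.1 ∪ P.2) ?_ ?_ ?_ ?_ ?_
  · intro G hG
    simp only [Finset.mem_product, Finset.mem_powerset]
    exact ⟨Finset.inter_subset_right, Finset.inter_subset_right⟩
  · rintro ⟨H, K⟩ hP
    simp only [Finset.mem_product, Finset.mem_powerset] at hP
    rw [Finset.mem_powerset]
    exact Finset.union_subset_union hP.1 hP.2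
  · intro G hG
    rw [Finset.mem_powerset] at hG
    simp only []
    rw [← Finset.inter_union_distrib_left, Finset.inter_eq_left.2 hG]
  · rintro ⟨H, K⟩ hP
    simp only [Finset.mem_product, Finset.mem_powerset] at hP
    have h1 : (H ∪ K) ∩ A = H := by
      ext x
      simp only [Finset.mem_inter, Finset.mem_union]
      constructor
      · rintro ⟨hx | hx, hxA⟩
        · exact hx
        · exact absurd hxA (Finset.disjoint_right.1 hAB (hP.2 hx))
      · exact fun hx => ⟨Or.inl hx, hP.1 hx⟩
    have h2 : (H ∪ K) ∩ B = K := by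
      ext x
      simp only [Finset.mem_inter, Finset.mem_union]
      constructor
      · rintro ⟨hx | hx, hxB⟩
        · exact absurd hxB (Finset.disjoint_left.1 hAB (hP.1 hx))
        · exact hx
      · exact fun hx => ⟨Or.inr hx, hP.2 hx⟩
    simp [h1, h2]
  · intro G hG
    rw [Finset.mem_powerset] at hG
    have h1 : (G ∩ A) ∪ (G ∩ B) = G := by
      rw [← Finset.inter_union_distrib_left, Finset.inter_eq_left.2 hG]
    have hd : Disjoint (G ∩ A) (G ∩ B) :=
      Finset.disjoint_of_subset_left Finset.inter_subset_right
        (Finset.disjoint_of_subset_right Finset.inter_subset_right hAB)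
    have hcard : G.card = (G ∩ A).card + (G ∩ B).card := by
      rw [← Finset.card_union_of_disjoint hd, h1]
    have hAu : (A ∪ B).card = A.card + B.card := Finset.card_union_of_disjoint hAB
    have hHA : (G ∩ A).card ≤ A.card := Finset.card_le_card Finset.inter_subset_right
    have hKB : (G ∩ B).card ≤ B.card := Finset.card_le_card Finset.inter_subset_right
    have h3 : (A ∪ B).card - G.card = (A.card - (G ∩ A).card) + (B.card - (G ∩ B).card) := by
      omega
    rw [h3, hcard, pow_add, pow_add]
    ring

lemma sum_ind_empty (p q : ℝ) (A : Finset X) :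
    ∑ H ∈ A.powerset, (if H = ∅ then (1:ℝ) else 0) * (p ^ H.card * q ^ (A.card - H.card))
      = q ^ A.card := by
  rw [Finset.sum_eq_single ∅]
  · simp
  · intro b _ hbne; simp [hbne]
  · intro h; exact absurd (Finset.empty_mem_powerset A) h

lemma sum_ind_nonempty (p q : ℝ) (hpq : p + q = 1) (A : Finset X) :
    ∑ H ∈ A.powerset, (if H.Nonempty then (1:ℝ) else 0) * (p ^ H.card * q ^ (A.card - H.card))
      = 1 - q ^ A.card := by
  have : ∀ H : Finset X, (if H.Nonempty then (1:ℝ) else 0)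
      = 1 - (if H = ∅ then (1:ℝ) else 0) := by
    intro H
    by_cases h : H = ∅
    · simp [h]
    · simp [h, Finset.nonempty_iff_ne_empty.2 h]
  simp only [this, sub_mul, one_mul]
  rw [Finset.sum_sub_distrib, sum_powerset_pow p q A, sum_ind_empty p q A, hpq, one_pow]

lemma key_lemma (p q : ℝ) (hpq : p + q = 1) {ι : Type*} [DecidableEq ι] (s : Finset ι)
    (S : ι → Finset X) (T : Finset X) :
    ∀ Ω : Finset X, (∀ i ∈ s, S i ⊆ Ω) → T ⊆ Ω → (∀ i ∈ s, Disjoint (S i) T) →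
      (∀ i ∈ s, ∀ j ∈ s, i ≠ j → Disjoint (S i) (S j)) →
      ∑ G ∈ Ω.powerset,
          (∏ i ∈ s, (if (G ∩ S i).Nonempty then (1:ℝ) else 0)) *
            (if G ∩ T = ∅ then (1:ℝ) else 0) * (p ^ G.card * q ^ (Ω.card - G.card))
        = (∏ i ∈ s, (1 - q ^ (S i).card)) * q ^ T.card := by
  induction s using Finset.induction_on with
  | empty =>
    intro Ω _ hT _ _
    have hU : T ∪ (Ω \ T) = Ω := Finset.union_sdiff_of_subset hT
    have hd : Disjoint T (Ω \ T) := Finset.disjoint_sdiff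
    simp only [Finset.prod_empty, one_mul]
    rw [← hU]
    calc ∑ G ∈ (T ∪ (Ω \ T)).powerset,
          (if G ∩ T = ∅ then (1:ℝ) else 0) * (p ^ G.card * q ^ ((T ∪ (Ω \ T)).card - G.card))
        = ∑ G ∈ (T ∪ (Ω \ T)).powerset,
          (if G ∩ T = ∅ then (1:ℝ) else 0) * ((1:ℝ)) *
            (p ^ G.card * q ^ ((T ∪ (Ω \ T)).card - G.card)) := by
          refine Finset.sum_congr rfl fun G _ => by ring
      _ = q ^ T.card := by
          rw [split_lemma p q T (Ω \ T) hd (fun H => if H = ∅ then (1:ℝ) else 0) (fun _ => 1)]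
          rw [sum_ind_empty p q T]
          have : ∑ K ∈ (Ω \ T).powerset,
              (1:ℝ) * (p ^ K.card * q ^ ((Ω \ T).card - K.card)) = 1 := by
            simp only [one_mul]
            rw [sum_powerset_pow p q, hpq, one_pow]
          rw [this, mul_one]
  | @insert i₀ s' hi IH =>
    intro Ω hS hT hST hSS
    have hA : S i₀ ⊆ Ω := hS i₀ (Finset.mem_insert_self _ _)
    set A := S i₀ with hAdef
    set B := Ω \ A with hBdef
    have hU : A ∪ B = Ω := Finset.union_sdiff_of_subset hA
    have hd : Disjoint A B := Finset.disjoint_sdiff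
    have hSB : ∀ i ∈ s', S i ⊆ B := by
      intro i hi'
      refine Finset.subset_sdiff.2 ⟨hS i (Finset.mem_insert_of_mem hi'), ?_⟩
      exact hSS i (Finset.mem_insert_of_mem hi') i₀ (Finset.mem_insert_self _ _)
        (fun h => hi (h ▸ hi'))
    have hTB : T ⊆ B :=
      Finset.subset_sdiff.2 ⟨hT, (hST i₀ (Finset.mem_insert_self _ _)).symm⟩
    rw [← hU]
    set f : Finset X → ℝ := fun H => if H.Nonempty then (1:ℝ) else 0 with hf
    set g : Finset X → ℝ := fun K =>
      (∏ i ∈ s', (if (K ∩ S i).Nonempty then (1:ℝ) else 0)) *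
        (if K ∩ T = ∅ then (1:ℝ) else 0) with hg
    have step : ∀ G ∈ (A ∪ B).powerset,
        (∏ i ∈ insert i₀ s', (if (G ∩ S i).Nonempty then (1:ℝ) else 0)) *
          (if G ∩ T = ∅ then (1:ℝ) else 0) * (p ^ G.card * q ^ ((A ∪ B).card - G.card))
        = f (G ∩ A) * g (G ∩ B) * (p ^ G.card * q ^ ((A ∪ B).card - G.card)) := by
      intro G hG
      have hGB : ∀ C : Finset X, C ⊆ B → (G ∩ B) ∩ C = G ∩ C := by
        intro C hC
        rw [Finset.inter_assoc, Finset.inter_eq_right.2 hC]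
      rw [Finset.prod_insert hi]
      simp only [hf, hg]
      rw [hGB T hTB,
        show (∏ i ∈ s', if ((G ∩ B) ∩ S i).Nonempty then (1:ℝ) else 0)
            = ∏ i ∈ s', if (G ∩ S i).Nonempty then (1:ℝ) else 0 from
          Finset.prod_congr rfl fun i hi' => by rw [hGB (S i) (hSB i hi')]]
      ring
    rw [Finset.sum_congr rfl step,
      split_lemma p q A B hd f g, sum_ind_nonempty p q hpq A,
      IH B hSB hTB (fun i hi' => hST i (Finset.mem_insert_of_mem hi'))
        (fun i hi' j hj' hij =>
          hSS i (Finset.mem_insert_of_mem hi') j (Finset.mem_insert_of_mem hj') hij),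
      Finset.prod_insert hi]
    ring

lemma card_adt (k d : ℕ) :
    (Finset.Nat.antidiagonalTuple k d).card = (k + d - 1).choose d := by
  rw [← Finset.piAntidiag_univ_fin_eq_antidiagonalTuple d k,
    ← Finset.map_sym_eq_piAntidiag, Finset.card_map]
  have : (Finset.univ : Finset (Fin k)).sym d = Finset.univ := by
    ext x; simp [Finset.mem_sym_iff]
  rw [this]
  simpa using Sym.card_sym_eq_choose (α := Fin k) d

lemma cardT (n D a : ℕ) (hn : 1 ≤ n) (ha : 1 ≤ a) (α : Fin n → ℕ)
    (hsum : ∑ i, α i = D + a) (hge : ∀ i, a ≤ α i) :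
    ((degSet n D).filter (fun β => ∀ j, β j < α j)).card = mfun n ((a:ℤ) - n) := by
  by_cases hcase : n ≤ a
  · have hmf : mfun n ((a:ℤ) - n) = (a - 1).choose (n - 1) := by
      rw [mfun, if_pos (by omega)]
      congr 1
      omega
    rw [hmf]
    have h1 : n + (a - n) - 1 = a - 1 := by omega
    have h2 : a - n = (a - 1) - (n - 1) := by omega
    have h3 : n - 1 ≤ a - 1 := by omega
    have hcard : ((degSet n D).filter (fun β => ∀ j, β j < α j)).card
        = (Finset.Nat.antidiagonalTuple n (a - n)).card := by
      refine Finset.card_nbij' (fun β => fun j => α j - 1 - β j)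
        (fun δ => fun j => α j - 1 - δ j) ?_ ?_ ?_ ?_
      · intro β hβ
        rw [Finset.mem_coe, Finset.mem_filter, degSet, Finset.Nat.mem_antidiagonalTuple] at hβ
        rw [Finset.mem_coe, Finset.Nat.mem_antidiagonalTuple]
        show ∑ j, (α j - 1 - β j) = a - n
        have point : ∀ j, (α j - 1 - β j) + (β j + 1) = α j := fun j => by
          have := hβ.2 j; omega
        have hsum2 : ∑ j, ((α j - 1 - β j) + (β j + 1)) = D + a := by
          rw [Finset.sum_congr rfl fun j _ => point j, hsum]
        rw [Finset.sum_add_distrib, Finset.sum_add_distrib, hβ.1, Finset.sum_const,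
          Finset.card_univ, Fintype.card_fin, smul_eq_mul, mul_one] at hsum2
        omega
      · intro δ hδ
        rw [Finset.mem_coe, Finset.Nat.mem_antidiagonalTuple] at hδ
        have hδle : ∀ j, δ j ≤ a - n := fun j => hδ ▸
          Finset.single_le_sum (fun _ _ => Nat.zero_le _) (Finset.mem_univ j)
        rw [Finset.mem_coe, Finset.mem_filter, degSet, Finset.Nat.mem_antidiagonalTuple]
        show (∑ j, (α j - 1 - δ j) = D) ∧ ∀ j, α j - 1 - δ j < α j
        have point : ∀ j, (α j - 1 - δ j) + (δ j + 1) = α j := fun j => by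
          have h1 := hδle j; have h2 := hge j; omega
        refine ⟨?_, fun j => by have h2 := hge j; omega⟩
        have hsum2 : ∑ j, ((α j - 1 - δ j) + (δ j + 1)) = D + a := by
          rw [Finset.sum_congr rfl fun j _ => point j, hsum]
        rw [Finset.sum_add_distrib, Finset.sum_add_distrib, hδ, Finset.sum_const,
          Finset.card_univ, Fintype.card_fin, smul_eq_mul, mul_one] at hsum2
        omega
      · intro β hβ
        rw [Finset.mem_coe, Finset.mem_filter] at hβ
        funext j
        show α j - 1 - (α j - 1 - β j) = β j
        have := hβ.2 j
        omega
      · intro δ hδ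
        rw [Finset.mem_coe, Finset.Nat.mem_antidiagonalTuple] at hδ
        have hδle : ∀ j, δ j ≤ a - n := fun j => hδ ▸
          Finset.single_le_sum (fun _ _ => Nat.zero_le _) (Finset.mem_univ j)
        funext j
        show α j - 1 - (α j - 1 - δ j) = δ j
        have h1 := hδle j; have h2 := hge j
        omega
    rw [hcard, card_adt, h1, h2, Nat.choose_symm h3]
  · have hmf : mfun n ((a:ℤ) - n) = 0 := by
      rw [mfun, if_neg (by omega)]
    rw [hmf, Finset.card_eq_zero]
    rw [Finset.eq_empty_iff_forall_notMem]
    intro β hβ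
    rw [Finset.mem_filter, degSet, Finset.Nat.mem_antidiagonalTuple] at hβ
    have hle : ∑ j, (β j + 1) ≤ ∑ j, α j :=
      Finset.sum_le_sum fun j _ => hβ.2 j
    rw [Finset.sum_add_distrib, hβ.1, Finset.sum_const, Finset.card_univ,
      Fintype.card_fin, smul_eq_mul, mul_one, hsum] at hle
    omega

lemma cardS (m D a : ℕ) (hm : 1 ≤ m) (ha : 1 ≤ a) (α : Fin (m+1) → ℕ) (i : Fin (m+1))
    (hsum : ∑ j, α j = D + a) (hge : ∀ j, a ≤ α j) :
    ((degSet (m+1) D).filter (fun β => β i = α i ∧ ∀ j, j ≠ i → β j < α j)).card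
      = mfun m ((a:ℤ) - m) := by
  have hsA : α i + ∑ k, α (i.succAbove k) = D + a := by
    rw [← Fin.sum_univ_succAbove α i, hsum]
  by_cases hcase : m ≤ a
  · have hmf : mfun m ((a:ℤ) - m) = (a - 1).choose (m - 1) := by
      rw [mfun, if_pos (by omega)]
      congr 1
      omega
    rw [hmf]
    have h1 : m + (a - m) - 1 = a - 1 := by omega
    have h2 : a - m = (a - 1) - (m - 1) := by omega
    have h3 : m - 1 ≤ a - 1 := by omega
    have hcard : ((degSet (m+1) D).filter
          (fun β => β i = α i ∧ ∀ j, j ≠ i → β j < α j)).card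
        = (Finset.Nat.antidiagonalTuple m (a - m)).card := by
      refine Finset.card_nbij'
        (fun β => fun k => α (i.succAbove k) - 1 - β (i.succAbove k))
        (fun δ => i.insertNth (α i) (fun k => α (i.succAbove k) - 1 - δ k)) ?_ ?_ ?_ ?_
      · intro β hβ
        rw [Finset.mem_coe, Finset.mem_filter, degSet, Finset.Nat.mem_antidiagonalTuple] at hβ
        obtain ⟨hβsum, hβi, hβlt⟩ := hβ
        rw [Finset.mem_coe, Finset.Nat.mem_antidiagonalTuple]
        show ∑ k, (α (i.succAbove k) - 1 - β (i.succAbove k)) = a - m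
        have hsB : α i + ∑ k, β (i.succAbove k) = D := by
          rw [← hβi, ← Fin.sum_univ_succAbove β i, hβsum]
        have point : ∀ k, (α (i.succAbove k) - 1 - β (i.succAbove k))
            + (β (i.succAbove k) + 1) = α (i.succAbove k) := fun k => by
          have := hβlt (i.succAbove k) (Fin.succAbove_ne i k)
          omega
        have hsum2 : ∑ k, ((α (i.succAbove k) - 1 - β (i.succAbove k))
            + (β (i.succAbove k) + 1)) = ∑ k, α (i.succAbove k) :=
          Finset.sum_congr rfl fun k _ => point k
        rw [Finset.sum_add_distrib, Finset.sum_add_distrib, Finset.sum_const,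
          Finset.card_univ, Fintype.card_fin, smul_eq_mul, mul_one] at hsum2
        omega
      · intro δ hδ
        rw [Finset.mem_coe, Finset.Nat.mem_antidiagonalTuple] at hδ
        have hδle : ∀ k, δ k ≤ a - m := fun k => hδ ▸
          Finset.single_le_sum (fun _ _ => Nat.zero_le _) (Finset.mem_univ k)
        rw [Finset.mem_coe, Finset.mem_filter, degSet, Finset.Nat.mem_antidiagonalTuple]
        beta_reduce
        refine ⟨?_, ?_, ?_⟩
        · rw [Fin.sum_univ_succAbove _ i]
          simp only [Fin.insertNth_apply_same, Fin.insertNth_apply_succAbove]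
          have point : ∀ k, (α (i.succAbove k) - 1 - δ k) + (δ k + 1)
              = α (i.succAbove k) := fun k => by
            have h1 := hδle k; have h2 := hge (i.succAbove k); omega
          have hsum2 : ∑ k, ((α (i.succAbove k) - 1 - δ k) + (δ k + 1))
              = ∑ k, α (i.succAbove k) := Finset.sum_congr rfl fun k _ => point k
          rw [Finset.sum_add_distrib, Finset.sum_add_distrib, hδ, Finset.sum_const,
            Finset.card_univ, Fintype.card_fin, smul_eq_mul, mul_one] at hsum2
          omega
        · simp only [Fin.insertNth_apply_same]
        · intro j hj2
          obtain ⟨k, rfl⟩ := Fin.exists_succAbove_eq hj2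
          simp only [Fin.insertNth_apply_succAbove]
          have h2 := hge (i.succAbove k)
          omega
      · intro β hβ
        rw [Finset.mem_coe, Finset.mem_filter] at hβ
        funext j
        beta_reduce
        rcases eq_or_ne j i with rfl | hne
        · rw [Fin.insertNth_apply_same, hβ.2.1]
        · obtain ⟨k, rfl⟩ := Fin.exists_succAbove_eq hne
          simp only [Fin.insertNth_apply_succAbove]
          have := hβ.2.2 (i.succAbove k) (Fin.succAbove_ne i k)
          omega
      · intro δ hδ
        rw [Finset.mem_coe, Finset.Nat.mem_antidiagonalTuple] at hδ
        have hδle : ∀ k, δ k ≤ a - m := fun k => hδ ▸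
          Finset.single_le_sum (fun _ _ => Nat.zero_le _) (Finset.mem_univ k)
        funext k
        beta_reduce
        simp only [Fin.insertNth_apply_succAbove]
        have h1 := hδle k; have h2 := hge (i.succAbove k)
        omega
    rw [hcard, card_adt, h1, h2, Nat.choose_symm h3]
  · have hmf : mfun m ((a:ℤ) - m) = 0 := by
      rw [mfun, if_neg (by omega)]
    rw [hmf, Finset.card_eq_zero, Finset.eq_empty_iff_forall_notMem]
    intro β hβ
    rw [Finset.mem_filter, degSet, Finset.Nat.mem_antidiagonalTuple] at hβ
    obtain ⟨hβsum, hβi, hβlt⟩ := hβ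
    have hsB : α i + ∑ k, β (i.succAbove k) = D := by
      rw [← hβi, ← Fin.sum_univ_succAbove β i, hβsum]
    have hle : ∑ k, (β (i.succAbove k) + 1) ≤ ∑ k, α (i.succAbove k) :=
      Finset.sum_le_sum fun k _ => hβlt (i.succAbove k) (Fin.succAbove_ne i k)
    rw [Finset.sum_add_distrib, Finset.sum_const, Finset.card_univ,
      Fintype.card_fin, smul_eq_mul, mul_one] at hle
    omega

end Aux

theorem prob_witness_event_eq
    (n D : ℕ) (hn : 2 ≤ n) (hD : 1 ≤ D) (p q : ℝ) (hp : p ∈ Set.Icc (0:ℝ) 1)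
    (hq : q = 1 - p) (a : ℕ) (ha : 1 ≤ a) (α : Fin n → ℕ)
    (hsum : ∑ i, α i = D + a) (hge : ∀ i, a ≤ α i) :
    grmPr n D p {G | wEvent α G} =
      (1 - q ^ mfun (n - 1) ((a : ℤ) - n + 1)) ^ n * q ^ mfun n ((a : ℤ) - n) := by
  classical
  obtain ⟨m, rfl⟩ : ∃ m, n = m + 1 := ⟨n - 1, by omega⟩
  have hm : 1 ≤ m := by omega
  have hpq : p + q = 1 := by rw [hq]; ring
  set Ω : Finset (Fin (m+1) → ℕ) := degSet (m+1) D with hΩ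
  set S : Fin (m+1) → Finset (Fin (m+1) → ℕ) := fun i =>
    Ω.filter (fun β => β i = α i ∧ ∀ j, j ≠ i → β j < α j) with hSdef
  set T : Finset (Fin (m+1) → ℕ) := Ω.filter (fun β => ∀ j, β j < α j) with hTdef
  have hS : ∀ i ∈ (Finset.univ : Finset (Fin (m+1))), S i ⊆ Ω :=
    fun i _ => Finset.filter_subset _ _
  have hT : T ⊆ Ω := Finset.filter_subset _ _
  have hST : ∀ i ∈ (Finset.univ : Finset (Fin (m+1))), Disjoint (S i) T := by
    intro i _
    rw [Finset.disjoint_left]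
    intro β hβS hβT
    rw [hSdef, Finset.mem_filter] at hβS
    rw [hTdef, Finset.mem_filter] at hβT
    have h1 := hβS.2.1
    have h2 := hβT.2 i
    omega
  have hSS : ∀ i ∈ (Finset.univ : Finset (Fin (m+1))),
      ∀ j ∈ (Finset.univ : Finset (Fin (m+1))), i ≠ j → Disjoint (S i) (S j) := by
    intro i _ j _ hij
    rw [Finset.disjoint_left]
    intro β hβi hβj
    rw [hSdef, Finset.mem_filter] at hβi hβj
    have h1 := hβi.2.1
    have h2 := hβj.2.2 i hij
    omega
  have hind : ∀ G ∈ Ω.powerset,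
      Set.indicator {G | wEvent α G} (fun _ => (1:ℝ)) G *
          (p ^ G.card * (1 - p) ^ (Ω.card - G.card))
        = (∏ i, (if (G ∩ S i).Nonempty then (1:ℝ) else 0)) *
            (if G ∩ T = ∅ then (1:ℝ) else 0) * (p ^ G.card * q ^ (Ω.card - G.card)) := by
    intro G hG
    rw [Finset.mem_powerset] at hG
    rw [← hq]
    congr 1
    have h1 : ∀ i, (G ∩ S i).Nonempty ↔
        ∃ β ∈ G, β i = α i ∧ ∀ j, j ≠ i → β j < α j := by
      intro i
      constructor
      · rintro ⟨β, hβ⟩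
        rw [Finset.mem_inter, hSdef, Finset.mem_filter] at hβ
        exact ⟨β, hβ.1, hβ.2.2⟩
      · rintro ⟨β, hβG, hβP⟩
        exact ⟨β, Finset.mem_inter.2 ⟨hβG, by
          rw [hSdef, Finset.mem_filter]; exact ⟨hG hβG, hβP⟩⟩⟩
    have h2 : G ∩ T = ∅ ↔ ¬ ∃ β ∈ G, ∀ j, β j < α j := by
      rw [Finset.eq_empty_iff_forall_notMem]
      constructor
      · rintro h ⟨β, hβG, hβP⟩
        exact h β (Finset.mem_inter.2 ⟨hβG, by
          rw [hTdef, Finset.mem_filter]; exact ⟨hG hβG, hβP⟩⟩)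
      · rintro h β hβ
        rw [Finset.mem_inter, hTdef, Finset.mem_filter] at hβ
        exact h ⟨β, hβ.1, hβ.2.2⟩
    by_cases hw : wEvent α G
    · rw [Set.indicator_of_mem (show G ∈ {G | wEvent α G} from hw)]
      rw [Finset.prod_eq_one fun i _ => if_pos ((h1 i).2 (hw.1 i)),
        if_pos (h2.2 hw.2), one_mul]
    · rw [Set.indicator_of_notMem (show G ∉ {G | wEvent α G} from hw)]
      rcases not_and_or.1 hw with hw1 | hw2
      · push_neg at hw1
        obtain ⟨i, hi⟩ := hw1
        have hne : ¬ (G ∩ S i).Nonempty := by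
          intro hne
          obtain ⟨β, hβG, hβi, hβlt⟩ := (h1 i).1 hne
          obtain ⟨j, hj, hjge⟩ := hi β hβG hβi
          exact absurd (hβlt j hj) (not_lt.2 hjge)
        rw [Finset.prod_eq_zero (Finset.mem_univ i)
          (show (if (G ∩ S i).Nonempty then (1:ℝ) else 0) = 0 from if_neg hne), zero_mul]
      · rw [not_not] at hw2
        rw [if_neg (fun he => (h2.1 he) hw2), mul_zero]
  have hcT : T.card = mfun (m+1) ((a:ℤ) - (m+1)) := by
    rw [hTdef, hΩ]
    exact cardT (m+1) D a (by omega) ha α hsum hge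
  have hcS : ∀ i, (S i).card = mfun m ((a:ℤ) - m) := by
    intro i
    rw [hSdef, hΩ]
    exact cardS m D a hm ha α i hsum hge
  rw [grmPr]
  rw [Finset.sum_congr rfl hind,
    key_lemma p q hpq Finset.univ S T Ω hS hT hST hSS]
  have e1 : ∏ i, (1 - q ^ (S i).card) = (1 - q ^ mfun m ((a:ℤ) - m)) ^ (m+1) := by
    rw [Finset.prod_congr rfl fun i _ => by rw [hcS i], Finset.prod_const,
      Finset.card_univ, Fintype.card_fin]
  rw [e1, hcT]
  have e2 : ((a:ℤ) - ((m+1:ℕ):ℤ) + 1) = (a:ℤ) - m := by push_cast; ring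
  have e3 : (m + 1) - 1 = m := by omega
  rw [e3, e2]
  simp only [Nat.cast_add, Nat.cast_one]
end

section
/- Let n ≥ 2, D ≥ 1, p ∈ [0,1], let a, b ≥ 1 be integers, and let α, β ∈ ℕ^n be distinct vectors with α_1+⋯+α_n = D+a, α_i ≥ a for all i, β_1+⋯+β_n = D+b, and β_i ≥ b for all i. For the random set G of the graded model M(n,D,p): (a) if Σ_i min(α_i, β_i) < D, then the witness events w_α and w_β are independent; (b) if α_i ≤ β_i for all i, then w_α and w_β are mutually exclusive, i.e., the probability that both w_α and w_β occur is 0. -/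
open Finset Filter

lemma union_inter_eq_left {X : Type*} [DecidableEq X] {A B S T : Finset X}
    (h : Disjoint A B) (hS : S ⊆ A) (hT : T ⊆ B) : (S ∪ T) ∩ A = S := by
  ext y
  simp only [Finset.mem_inter, Finset.mem_union]
  constructor
  · rintro ⟨hy | hy, hyA⟩
    · exact hy
    · exact absurd hyA (Finset.disjoint_right.1 h (hT hy))
  · intro hy
    exact ⟨Or.inl hy, hS hy⟩

lemma inter_union_self_of_subset {X : Type*} [DecidableEq X] {A B G : Finset X}
    (hG : G ⊆ A ∪ B) : G ∩ A ∪ G ∩ B = G := by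
  ext y
  simp only [Finset.mem_union, Finset.mem_inter]
  constructor
  · rintro (⟨hy, _⟩ | ⟨hy, _⟩) <;> exact hy
  · intro hy
    rcases Finset.mem_union.1 (hG hy) with h' | h'
    · exact Or.inl ⟨hy, h'⟩
    · exact Or.inr ⟨hy, h'⟩

/-- Reindex a sum over the powerset of a disjoint union. -/
lemma sum_powerset_union_disj {X : Type*} [DecidableEq X] {A B : Finset X}
    (h : Disjoint A B) (f : Finset X → ℝ) :
    ∑ G ∈ (A ∪ B).powerset, f G = ∑ S ∈ A.powerset, ∑ T ∈ B.powerset, f (S ∪ T) := by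
  rw [← Finset.sum_product']
  refine Finset.sum_nbij' (fun G => (G ∩ A, G ∩ B)) (fun x => x.1 ∪ x.2) ?_ ?_ ?_ ?_ ?_
  · intro G hG
    simp only [Finset.mem_product, Finset.mem_powerset]
    exact ⟨Finset.inter_subset_right, Finset.inter_subset_right⟩
  · intro x hx
    simp only [Finset.mem_product, Finset.mem_powerset] at hx
    exact Finset.mem_powerset.2 (Finset.union_subset_union hx.1 hx.2)
  · intro G hG
    simp only [Finset.mem_powerset] at hG
    exact inter_union_self_of_subset hG
  · intro x hx
    simp only [Finset.mem_product, Finset.mem_powerset] at hx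
    show ((x.1 ∪ x.2) ∩ A, (x.1 ∪ x.2) ∩ B) = x
    have h1 : (x.1 ∪ x.2) ∩ A = x.1 := union_inter_eq_left h hx.1 hx.2
    have h2 : (x.1 ∪ x.2) ∩ B = x.2 := by
      rw [Finset.union_comm]
      exact union_inter_eq_left h.symm hx.2 hx.1
    rw [h1, h2]
  · intro G hG
    simp only [Finset.mem_powerset] at hG
    show f G = f (G ∩ A ∪ G ∩ B)
    rw [inter_union_self_of_subset hG]

/-- Factorization of the Bernoulli-weighted sum over a disjoint union. -/
lemma pair_factor {X : Type*} [DecidableEq X] {A B : Finset X} (h : Disjoint A B)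
    (p q : ℝ) (u v : Finset X → ℝ) :
    ∑ G ∈ (A ∪ B).powerset,
        u (G ∩ A) * v (G ∩ B) * (p ^ G.card * q ^ ((A ∪ B).card - G.card)) =
    (∑ S ∈ A.powerset, u S * (p ^ S.card * q ^ (A.card - S.card))) *
      (∑ T ∈ B.powerset, v T * (p ^ T.card * q ^ (B.card - T.card))) := by
  rw [sum_powerset_union_disj h, Finset.sum_mul_sum]
  refine Finset.sum_congr rfl fun S hS => Finset.sum_congr rfl fun T hT => ?_
  simp only [Finset.mem_powerset] at hS hT
  have hST : Disjoint S T := h.mono hS hT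
  have h1 : (S ∪ T) ∩ A = S := union_inter_eq_left h hS hT
  have h2 : (S ∪ T) ∩ B = T := by
    rw [Finset.union_comm]
    exact union_inter_eq_left h.symm hT hS
  have hc : (S ∪ T).card = S.card + T.card := Finset.card_union_of_disjoint hST
  have hcab : (A ∪ B).card = A.card + B.card := Finset.card_union_of_disjoint h
  have hsa : S.card ≤ A.card := Finset.card_le_card hS
  have htb : T.card ≤ B.card := Finset.card_le_card hT
  have hsub : (A ∪ B).card - (S ∪ T).card = (A.card - S.card) + (B.card - T.card) := by
    rw [hc, hcab]; omega
  rw [h1, h2, hsub, hc, pow_add, pow_add]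
  ring

/-- The total mass of the Bernoulli weights. -/
lemma sum_bern {X : Type*} [DecidableEq X] (p q : ℝ) (A : Finset X) :
    ∑ S ∈ A.powerset, p ^ S.card * q ^ (A.card - S.card) = (p + q) ^ A.card := by
  induction A using Finset.induction_on with
  | empty => simp
  | insert _ _ ha ih =>
    rename_i x A
    rw [Finset.sum_powerset_insert ha, Finset.card_insert_of_notMem ha]
    have h1 : ∀ S ∈ A.powerset, p ^ S.card * q ^ (A.card + 1 - S.card)
        = q * (p ^ S.card * q ^ (A.card - S.card)) := by
      intro S hS
      simp only [Finset.mem_powerset] at hS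
      have : A.card + 1 - S.card = (A.card - S.card) + 1 := by
        have := Finset.card_le_card hS; omega
      rw [this, pow_succ]; ring
    have h2 : ∀ S ∈ A.powerset, p ^ (insert x S).card * q ^ (A.card + 1 - (insert x S).card)
        = p * (p ^ S.card * q ^ (A.card - S.card)) := by
      intro S hS
      simp only [Finset.mem_powerset] at hS
      have hx : x ∉ S := fun hxs => ha (hS hxs)
      rw [Finset.card_insert_of_notMem hx]
      have : A.card + 1 - (S.card + 1) = A.card - S.card := by omega
      rw [this, pow_succ]; ring
    rw [Finset.sum_congr rfl h1, Finset.sum_congr rfl h2, ← Finset.mul_sum, ← Finset.mul_sum,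
      ih, pow_succ]
    ring

lemma ind_iff {γ : Type*} {E : Set γ} {x y : γ} (h : x ∈ E ↔ y ∈ E) :
    E.indicator (fun _ => (1:ℝ)) x = E.indicator (fun _ => (1:ℝ)) y := by
  by_cases hx : x ∈ E
  · rw [Set.indicator_of_mem hx, Set.indicator_of_mem (h.1 hx)]
  · rw [Set.indicator_of_notMem hx, Set.indicator_of_notMem (fun hy => hx (h.2 hy))]

lemma ind_and {γ : Type*} (P Q : γ → Prop) (x : γ) :
    Set.indicator {g | P g ∧ Q g} (fun _ => (1:ℝ)) x =
      Set.indicator {g | P g} (fun _ => (1:ℝ)) x *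
        Set.indicator {g | Q g} (fun _ => (1:ℝ)) x := by
  by_cases hP : P x <;> by_cases hQ : Q x <;>
    simp [Set.indicator_apply, Set.mem_setOf_eq, hP, hQ]

/-- `wEvent α` only depends on the part of `G` below `α`. -/
lemma wEvent_inter {n : ℕ} (α : Fin n → ℕ) (Ω G : Finset (Fin n → ℕ)) (hG : G ⊆ Ω) :
    wEvent α G ↔ wEvent α (G ∩ Ω.filter (fun γ => ∀ j, γ j ≤ α j)) := by
  constructor
  · rintro ⟨h1, h2⟩
    constructor
    · intro i
      obtain ⟨γ, hγG, hγi, hγlt⟩ := h1 i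
      refine ⟨γ, ?_, hγi, hγlt⟩
      rw [Finset.mem_inter, Finset.mem_filter]
      refine ⟨hγG, hG hγG, fun j => ?_⟩
      by_cases hj : j = i
      · subst hj; exact hγi.le
      · exact (hγlt j hj).le
    · rintro ⟨γ, hγ, hlt⟩
      exact h2 ⟨γ, (Finset.mem_inter.1 hγ).1, hlt⟩
  · rintro ⟨h1, h2⟩
    constructor
    · intro i
      obtain ⟨γ, hγG, hγi, hγlt⟩ := h1 i
      exact ⟨γ, (Finset.mem_inter.1 hγG).1, hγi, hγlt⟩
    · rintro ⟨γ, hγ, hlt⟩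
      refine h2 ⟨γ, ?_, hlt⟩
      rw [Finset.mem_inter, Finset.mem_filter]
      exact ⟨hγ, hG hγ, fun j => (hlt j).le⟩

theorem witness_events_independent_or_exclusive
    (n D : ℕ) (hn : 2 ≤ n) (hD : 1 ≤ D) (p : ℝ) (hp : p ∈ Set.Icc (0:ℝ) 1)
    (a b : ℕ) (ha : 1 ≤ a) (hb : 1 ≤ b) (α β : Fin n → ℕ) (hne : α ≠ β)
    (hsumα : ∑ i, α i = D + a) (hgeα : ∀ i, a ≤ α i)
    (hsumβ : ∑ i, β i = D + b) (hgeβ : ∀ i, b ≤ β i) :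
    ((∑ i, min (α i) (β i)) < D →
      grmPr n D p {G | wEvent α G ∧ wEvent β G} =
        grmPr n D p {G | wEvent α G} * grmPr n D p {G | wEvent β G}) ∧
    ((∀ i, α i ≤ β i) →
      grmPr n D p {G | wEvent α G ∧ wEvent β G} = 0) := by
  classical
  constructor
  · -- independence
    intro hmin
    set Ω := degSet n D with hΩdef
    set A := Ω.filter (fun γ => ∀ j, γ j ≤ α j) with hA
    set B := Ω.filter (fun γ => ∀ j, γ j ≤ β j) with hB
    have hAΩ : A ⊆ Ω := Finset.filter_subset _ _
    have hBΩ : B ⊆ Ω := Finset.filter_subset _ _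
    have hdisj : Disjoint A B := by
      rw [Finset.disjoint_left]
      intro γ hγA hγB
      rw [hA, Finset.mem_filter] at hγA
      rw [hB, Finset.mem_filter] at hγB
      have hsum : ∑ i, γ i = D := Finset.Nat.mem_antidiagonalTuple.1 hγA.1
      have : ∑ i, γ i ≤ ∑ i, min (α i) (β i) :=
        Finset.sum_le_sum fun i _ => le_min (hγA.2 i) (hγB.2 i)
      omega
    set R := Ω \ A with hR
    have hAR : Disjoint A R := Finset.disjoint_sdiff
    have hΩAR : Ω = A ∪ R := (Finset.union_sdiff_of_subset hAΩ).symm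
    have hBR : B ⊆ R := fun x hx =>
      Finset.mem_sdiff.2 ⟨hBΩ hx, fun hxA => (Finset.disjoint_left.1 hdisj hxA) hx⟩
    set C := R \ B with hC
    have hBC : Disjoint B C := Finset.disjoint_sdiff
    have hRBC : R = B ∪ C := (Finset.union_sdiff_of_subset hBR).symm
    set q := (1 : ℝ) - p with hq
    set e := ∑ S ∈ A.powerset,
      Set.indicator {G | wEvent α G} (fun _ => (1:ℝ)) S * (p ^ S.card * q ^ (A.card - S.card))
      with he
    set f := ∑ T ∈ B.powerset,
      Set.indicator {G | wEvent β G} (fun _ => (1:ℝ)) T * (p ^ T.card * q ^ (B.card - T.card))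
      with hf
    have hones : ∀ (Z : Finset (Fin n → ℕ)),
        ∑ T ∈ Z.powerset, (fun (_ : Finset (Fin n → ℕ)) => (1:ℝ)) T *
          (p ^ T.card * q ^ (Z.card - T.card)) = 1 := by
      intro Z
      simp only [one_mul]
      rw [sum_bern]
      norm_num [hq]
    have hinner : ∀ (v : Finset (Fin n → ℕ) → ℝ),
        ∑ T ∈ R.powerset, v (T ∩ B) * (p ^ T.card * q ^ (R.card - T.card)) =
        (∑ T ∈ B.powerset, v T * (p ^ T.card * q ^ (B.card - T.card))) * 1 := by
      intro v
      rw [← hones C]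
      rw [show (∑ T ∈ R.powerset, v (T ∩ B) * (p ^ T.card * q ^ (R.card - T.card))) =
          ∑ T ∈ R.powerset, v (T ∩ B) * (fun (_ : Finset (Fin n → ℕ)) => (1:ℝ)) (T ∩ C) *
            (p ^ T.card * q ^ (R.card - T.card)) by
        refine Finset.sum_congr rfl fun T hT => by ring]
      rw [show R.powerset = (B ∪ C).powerset by rw [← hRBC],
        show R.card = (B ∪ C).card by rw [← hRBC]]
      exact pair_factor hBC p q v (fun _ => (1:ℝ))
    have keyGB : ∀ G ⊆ Ω, G ∩ B = (G ∩ R) ∩ B := by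
      intro G hG
      rw [Finset.inter_assoc, Finset.inter_eq_right.2 hBR]
    have expand : ∀ (u v : Finset (Fin n → ℕ) → ℝ),
        (∑ G ∈ Ω.powerset, u (G ∩ A) * v (G ∩ B) * (p ^ G.card * q ^ (Ω.card - G.card))) =
        (∑ S ∈ A.powerset, u S * (p ^ S.card * q ^ (A.card - S.card))) *
          ((∑ T ∈ B.powerset, v T * (p ^ T.card * q ^ (B.card - T.card))) * 1) := by
      intro u v
      rw [← hinner v]
      rw [show (∑ G ∈ Ω.powerset, u (G ∩ A) * v (G ∩ B) * (p ^ G.card * q ^ (Ω.card - G.card))) =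
          ∑ G ∈ Ω.powerset, u (G ∩ A) * (fun T => v (T ∩ B)) (G ∩ R) *
            (p ^ G.card * q ^ (Ω.card - G.card)) by
        refine Finset.sum_congr rfl fun G hG => ?_
        rw [keyGB G (Finset.mem_powerset.1 hG)]]
      rw [show Ω.powerset = (A ∪ R).powerset by rw [← hΩAR],
        show Ω.card = (A ∪ R).card by rw [← hΩAR]]
      exact pair_factor hAR p q u (fun T => v (T ∩ B))
    have hEα : ∀ G ⊆ Ω, Set.indicator {G | wEvent α G} (fun _ => (1:ℝ)) G =
        Set.indicator {G | wEvent α G} (fun _ => (1:ℝ)) (G ∩ A) :=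
      fun G hG => ind_iff (wEvent_inter α Ω G hG)
    have hEβ : ∀ G ⊆ Ω, Set.indicator {G | wEvent β G} (fun _ => (1:ℝ)) G =
        Set.indicator {G | wEvent β G} (fun _ => (1:ℝ)) (G ∩ B) :=
      fun G hG => ind_iff (wEvent_inter β Ω G hG)
    have h1 : grmPr n D p {G | wEvent α G ∧ wEvent β G} = e * (f * 1) := by
      rw [grmPr, ← expand]
      refine Finset.sum_congr rfl fun G hG => ?_
      have hGΩ : G ⊆ Ω := Finset.mem_powerset.1 hG
      rw [ind_and (wEvent α) (wEvent β) G, hEα G hGΩ, hEβ G hGΩ]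
    have h2 : grmPr n D p {G | wEvent α G} = e * (1 * 1) := by
      rw [grmPr]
      calc ∑ G ∈ (degSet n D).powerset,
            Set.indicator {G | wEvent α G} (fun _ => (1:ℝ)) G *
              (p ^ G.card * (1 - p) ^ ((degSet n D).card - G.card))
          = ∑ G ∈ Ω.powerset,
              Set.indicator {G | wEvent α G} (fun _ => (1:ℝ)) (G ∩ A) *
                (fun (_ : Finset (Fin n → ℕ)) => (1:ℝ)) (G ∩ B) *
                (p ^ G.card * q ^ (Ω.card - G.card)) := by
            refine Finset.sum_congr rfl fun G hG => ?_
            rw [hEα G (Finset.mem_powerset.1 hG)]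
            ring
        _ = e * ((∑ T ∈ B.powerset, (fun (_ : Finset (Fin n → ℕ)) => (1:ℝ)) T *
              (p ^ T.card * q ^ (B.card - T.card))) * 1) := by
            rw [he]
            exact expand (Set.indicator {G | wEvent α G} (fun _ => (1:ℝ))) (fun _ => (1:ℝ))
        _ = e * (1 * 1) := by rw [hones B]
    have h3 : grmPr n D p {G | wEvent β G} = 1 * (f * 1) := by
      rw [grmPr]
      calc ∑ G ∈ (degSet n D).powerset,
            Set.indicator {G | wEvent β G} (fun _ => (1:ℝ)) G *
              (p ^ G.card * (1 - p) ^ ((degSet n D).card - G.card))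
          = ∑ G ∈ Ω.powerset,
              (fun (_ : Finset (Fin n → ℕ)) => (1:ℝ)) (G ∩ A) *
                Set.indicator {G | wEvent β G} (fun _ => (1:ℝ)) (G ∩ B) *
                (p ^ G.card * q ^ (Ω.card - G.card)) := by
            refine Finset.sum_congr rfl fun G hG => ?_
            rw [hEβ G (Finset.mem_powerset.1 hG)]
            ring
        _ = (∑ S ∈ A.powerset, (fun (_ : Finset (Fin n → ℕ)) => (1:ℝ)) S *
              (p ^ S.card * q ^ (A.card - S.card))) * (f * 1) := by
            rw [hf]
            exact expand (fun _ => (1:ℝ)) (Set.indicator {G | wEvent β G} (fun _ => (1:ℝ)))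
        _ = 1 * (f * 1) := by rw [hones A]
    rw [h1, h2, h3]
    ring
  · -- mutual exclusion
    intro hle
    have hempty : ∀ G : Finset (Fin n → ℕ),
        G ∉ {G : Finset (Fin n → ℕ) | wEvent α G ∧ wEvent β G} := by
      rintro G ⟨⟨hα1, hα2⟩, hβ1, hβ2⟩
      obtain ⟨i, hi⟩ : ∃ i, α i < β i := by
        by_contra hcon
        push_neg at hcon
        exact hne (funext fun i => le_antisymm (hle i) (hcon i))
      obtain ⟨γ, hγG, hγi, hγlt⟩ := hα1 i
      refine hβ2 ⟨γ, hγG, fun j => ?_⟩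
      by_cases hj : j = i
      · subst hj; omega
      · exact lt_of_lt_of_le (hγlt j hj) (hle j)
    rw [grmPr]
    refine Finset.sum_eq_zero fun G hG => ?_
    rw [Set.indicator_of_notMem (hempty G), zero_mul]
end
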